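/- arXiv:2210.05269 — 2 statements merged into one kernel-verified Lean document; each statement's English description precedes it below -/
import Mathlib

section
/- For every integer n >= 1, the ploidy profile (2^n, 2^{n-1}, ..., 2^1, 2^0) is tree-child; in particular, the realization N(m) of this profile obtained by initializing the traceback construction with the core network B(m) is a tree-child phylogenetic network. -/
/-!
Formalization preamble for "Autopolyploidy, allopolyploidy, and phylogenetic
networks with horizontal arcs" (Huber & Maher).

Networks are finite directed multigraphs whose vertices and arcs are (finitely
many) natural numbers; parallel arcs (beads) are allowed, loops are not.
-/

namespace Ploidy

/-- A finite directed multigraph: both vertex names and arc identifiers are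
natural numbers; `src`/`tgt` give the endpoints of each arc. -/
structure Net where
  verts : Finset ℕ
  arcs : Finset ℕ
  src : ℕ → ℕ
  tgt : ℕ → ℕ

/-- The indegree of a vertex. -/
def inDeg (G : Net) (v : ℕ) : ℕ := (G.arcs.filter fun a => G.tgt a = v).card

/-- The outdegree of a vertex. -/
def outDeg (G : Net) (v : ℕ) : ℕ := (G.arcs.filter fun a => G.src a = v).card

def IsLeafN (G : Net) (v : ℕ) : Prop := v ∈ G.verts ∧ inDeg G v = 1 ∧ outDeg G v = 0
def IsTreeVert (G : Net) (v : ℕ) : Prop := v ∈ G.verts ∧ inDeg G v = 1 ∧ outDeg G v = 2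
def IsReticN (G : Net) (v : ℕ) : Prop := v ∈ G.verts ∧ inDeg G v = 2 ∧ outDeg G v = 1
def IsRootN (G : Net) (v : ℕ) : Prop := v ∈ G.verts ∧ inDeg G v = 0

instance (G : Net) (v : ℕ) : Decidable (IsLeafN G v) :=
  decidable_of_iff (v ∈ G.verts ∧ inDeg G v = 1 ∧ outDeg G v = 0) Iff.rfl

/-- `IsWalk G l u v`: the list of arcs `l` forms a directed walk from `u` to `v`. -/
def IsWalk (G : Net) : List ℕ → ℕ → ℕ → Prop
  | [], u, v => u = v ∧ u ∈ G.verts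
  | a :: l, u, v => a ∈ G.arcs ∧ G.src a = u ∧ IsWalk G l (G.tgt a) v

/-- The number of directed paths from `u` to `v` (in a DAG every directed walk is
a path, and there are finitely many of them). -/
noncomputable def nPaths (G : Net) (u v : ℕ) : ℕ := Set.ncard {l : List ℕ | IsWalk G l u v}

/-- `a` is an arc from `u` to `v`. -/
def ArcFT (G : Net) (a u v : ℕ) : Prop := a ∈ G.arcs ∧ G.src a = u ∧ G.tgt a = v

/-- `u` is a parent of `v`. -/
def IsParent (G : Net) (u v : ℕ) : Prop := ∃ a, ArcFT G a u v

/-- `w` is below `u` (reachable from `u` by a directed walk, possibly `u = w`). -/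
def BelowV (G : Net) (u w : ℕ) : Prop := ∃ l, IsWalk G l u w

/-- `v` is an end vertex of a pair of parallel arcs (a bead). -/
def InBead (G : Net) (v : ℕ) : Prop :=
  ∃ a b, a ∈ G.arcs ∧ b ∈ G.arcs ∧ a ≠ b ∧ G.src a = G.src b ∧ G.tgt a = G.tgt b ∧
    (G.src a = v ∨ G.tgt a = v)

/-- `G` is beadless: there is no pair of parallel arcs. -/
def Beadless (G : Net) : Prop := ∀ v, ¬ InBead G v

/-- `G` is a (rooted, binary) phylogenetic network in the sense of Huber–Maher:
a rooted DAG, possibly with beads but without loops, with a unique root of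
indegree 0 and outdegree 2, all of whose other vertices are leaves, tree
vertices or reticulation vertices. -/
structure IsPhylo (G : Net) : Prop where
  src_mem : ∀ a ∈ G.arcs, G.src a ∈ G.verts
  tgt_mem : ∀ a ∈ G.arcs, G.tgt a ∈ G.verts
  no_loop : ∀ a ∈ G.arcs, G.src a ≠ G.tgt a
  acyclic : ∀ (v : ℕ) (l : List ℕ), l ≠ [] → ¬ IsWalk G l v v
  root_exu : ∃! r, IsRootN G r
  root_out : ∀ r, IsRootN G r → outDeg G r = 2
  types : ∀ v ∈ G.verts, IsRootN G v ∨ IsLeafN G v ∨ IsTreeVert G v ∨ IsReticN G v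

/-- An HGT-consistent labelling: (P1), (P2) and (P3) (the latter required only for
reticulation vertices not contained in beads). -/
def IsHGT (G : Net) (t : ℕ → ℝ) : Prop :=
  (∀ v ∈ G.verts, 0 ≤ t v) ∧
  (∀ a ∈ G.arcs,
      (IsReticN G (G.tgt a) → t (G.src a) ≤ t (G.tgt a)) ∧
      (¬ IsReticN G (G.tgt a) → t (G.src a) < t (G.tgt a))) ∧
  (∀ u ∈ G.verts, ¬ IsLeafN G u → ∃ v, IsParent G u v ∧ t u < t v) ∧
  (∀ v, IsReticN G v → ¬ InBead G v → ∃! u, IsParent G u v ∧ t u = t v)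

/-- `v` is a reticulation vertex (not contained in a bead) violating (P3). -/
def ViolatesP3 (G : Net) (t : ℕ → ℝ) (v : ℕ) : Prop :=
  IsReticN G v ∧ ¬ InBead G v ∧ ¬ (∃! u, IsParent G u v ∧ t u = t v)

/-- A weak HGT-consistent labelling: (P1), (P2) and (P3'): at most one reticulation
vertex `v`, with distinct parents `u₁, u₂` such that `u₂` is below `u₁` and
`t u₁ ≠ t v ≠ t u₂`, violates (P3). -/
def IsWeakHGT (G : Net) (t : ℕ → ℝ) : Prop :=
  (∀ v ∈ G.verts, 0 ≤ t v) ∧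
  (∀ a ∈ G.arcs,
      (IsReticN G (G.tgt a) → t (G.src a) ≤ t (G.tgt a)) ∧
      (¬ IsReticN G (G.tgt a) → t (G.src a) < t (G.tgt a))) ∧
  (∀ u ∈ G.verts, ¬ IsLeafN G u → ∃ v, IsParent G u v ∧ t u < t v) ∧
  (∀ v w, ViolatesP3 G t v → ViolatesP3 G t w → v = w) ∧
  (∀ v, ViolatesP3 G t v →
      ∃ u1 u2, u1 ≠ u2 ∧ IsParent G u1 v ∧ IsParent G u2 v ∧ BelowV G u1 u2 ∧
        t u1 ≠ t v ∧ t u2 ≠ t v)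

/-! ### Ploidy profiles and the simplification sequence -/

/-- A ploidy profile: a nonempty descending list of positive integers; the entry at
(0-based) position `i` is indexed by the taxon `x_{i+1}`. -/
def IsProfileL (l : List ℕ) : Prop := l ≠ [] ∧ l.Pairwise (· ≥ ·) ∧ ∀ x ∈ l, 1 ≤ x

/-- A simple ploidy profile: first component at least 2, all other components 1. -/
def IsSimpleP (l : List ℕ) : Prop := l ≠ [] ∧ 2 ≤ l.headI ∧ ∀ x ∈ l.tail, x = 1

/-- A strictly simple ploidy profile. -/
def IsStrictlySimpleP (l : List ℕ) : Prop := IsSimpleP l ∧ l.length = 1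

/-- Insert `x` into a descending list, directly after the last occurrence of the
value `x` (i.e. after all entries `≥ x`). -/
def insertDesc (x : ℕ) : List ℕ → List ℕ
  | [] => [x]
  | y :: ys => if x ≤ y then y :: insertDesc x ys else x :: y :: ys

/-- One step of the simplification process for ploidy profiles; simple profiles are
fixed points.  With `α = m₁ - m₂`: if `α = 0` delete `m₁`; if `α > m₂` replace `m₁`
by `α`; if `0 < α ≤ m₂` delete `m₁` and insert `α` directly after the last
occurrence of the value `α`. -/
def simpStep (l : List ℕ) : List ℕ :=
  if 2 ≤ l.headI ∧ ∀ x ∈ l.tail, x = 1 then l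
  else
    match l with
    | m1 :: m2 :: rest =>
        if m1 = m2 then m2 :: rest
        else if m2 < m1 - m2 then (m1 - m2) :: m2 :: rest
        else insertDesc (m1 - m2) (m2 :: rest)
    | _ => l

/-- `mt` is the (simple) terminal element of the simplification sequence of `m`. -/
def IsTerminal (m mt : List ℕ) : Prop := IsSimpleP mt ∧ ∃ k, simpStep^[k] m = mt

/-- A practical ploidy profile: simple but not strictly simple, or `(2^l)`, `l ≥ 1`. -/
def Practical (l : List ℕ) : Prop :=
  (IsSimpleP l ∧ 2 ≤ l.length) ∨ (l.length = 1 ∧ ∃ j, 1 ≤ j ∧ l.headI = 2 ^ j)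

/-- An arc-rich (strictly simple) ploidy profile: the binary representation of its
single component has dimension at least two. -/
def ArcRich (l : List ℕ) : Prop :=
  l.length = 1 ∧ 2 ≤ l.headI ∧ 2 ≤ (Nat.bits l.headI).count true

/-! ### Realizations of ploidy profiles -/

/-- A network together with an indexing of its leaves by the positions of a
ploidy profile. -/
structure LNet where
  net : Net
  leaf : ℕ → ℕ

/-- `R` is a phylogenetic network realizing the ploidy profile `m`: the leaves of
`R.net` are bijectively indexed by the positions of `m` and, for every `i`, the
number of directed paths from the root to the leaf `R.leaf i` is the `i`-th
component of `m`. -/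
def RealizesL (R : LNet) (m : List ℕ) : Prop :=
  IsPhylo R.net ∧
  (∀ i < m.length, IsLeafN R.net (R.leaf i)) ∧
  (∀ i j, i < m.length → j < m.length → R.leaf i = R.leaf j → i = j) ∧
  (∀ v, IsLeafN R.net v → ∃ i < m.length, R.leaf i = v) ∧
  (∀ i < m.length, ∀ r, IsRootN R.net r → nPaths R.net r (R.leaf i) = m.getD i 0)

/-! ### Concrete constructions: bead chains and the core network `B(m)` -/

/-- Build a network from a list of arcs (as (source, target) pairs); arc
identifiers are positions in the list, so repeated pairs yield beads. -/
def mkNet (l : List (ℕ × ℕ)) : Net where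
  verts := (l.map Prod.fst ++ l.map Prod.snd).toFinset
  arcs := Finset.range l.length
  src := fun i => (l.getD i (0, 0)).1
  tgt := fun i => (l.getD i (0, 0)).2

/-- The chain `B(l)` of `l` beads with a pendant leaf: vertex `2*j` is the tree
vertex of the `(j+1)`-st bead, `2*j+1` its reticulation vertex `h_{j+1}`, there is
an arc from `h_j` to the tree vertex of the next bead, and `2*l` is the pendant
leaf `x₁` attached by the arc `(h_l, x₁)`. -/
def beadChain (l : ℕ) : Net :=
  mkNet ((List.range l).flatMap fun j => [(2*j, 2*j+1), (2*j, 2*j+1), (2*j+1, 2*j+2)])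

/-- The decreasing list `(i₁, …, i_k)` of exponents of the binary representation
of `m₁`. -/
def expList (m1 : ℕ) : List ℕ :=
  ((List.range (m1+1)).filter fun j => m1.testBit j).reverse

/-- First vertex code available for the leaves `x_2, …, x_n` in `BNet`. -/
def xBase (m1 : ℕ) : ℕ := 2 * (expList m1).headI + 2 * (expList m1).length + 10

/-- The arcs of the core network `B(m)` for the simple profile `(m₁, 1, …, 1)` on
`n` taxa: a chain of `i₁` beads with pendant leaf `x₁ = 0` (root is the vertex
`2`), one root arc subdivided by `s_k` and, for `2 ≤ j ≤ k`, an arc `(s_j, s_j')`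
where `s_j'` subdivides the outgoing arc of the reticulation vertex having exactly
`i_j` reticulation vertices strictly below it and `s_2, …, s_{k-1}` subdivide the
arc `(s_k, s_k')`; if `n ≥ 2` a caterpillar tree on the leaves `x_2, …, x_n`
(codes `xBase m₁ + i`) is attached via a subdivision vertex `w` (placed on a root
arc if `k = 1`, on `(s_k, s_k')` if `k = 2`, and on `(s_{k-1}, s_k')` if `k ≥ 3`). -/
def BArcs (m1 n : ℕ) : List (ℕ × ℕ) :=
  let E := expList m1
  let k := E.length
  let i1 := E.headI
  let hv : ℕ → ℕ := fun j => 2*j + 1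
  let tv : ℕ → ℕ := fun j => 2*j
  let nxt : ℕ → ℕ := fun j => if j = i1 then 0 else 2*j + 2
  let S' : ℕ → ℕ := fun j => 2*i1 + 2 + j
  let P : ℕ → ℕ := fun j => 2*i1 + k + 2 + j
  let w : ℕ := 2*i1 + 2*k + 4
  let L : ℕ := 2*i1 + 2*k + 10
  let x : ℕ → ℕ := fun i => L + i
  let cv : ℕ → ℕ := fun i => L + n + i
  let r : ℕ → ℕ := fun t => i1 - E.getD (t-1) 0
  let rootArcs : List (ℕ × ℕ) :=
    if 2 ≤ k then [(tv 1, hv 1), (tv 1, P k), (P k, hv 1)]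
    else if 2 ≤ n then [(tv 1, hv 1), (tv 1, w), (w, hv 1)]
    else [(tv 1, hv 1), (tv 1, hv 1)]
  let otherBeads : List (ℕ × ℕ) :=
    (List.range' 2 (i1 - 1)).flatMap fun j => [(tv j, hv j), (tv j, hv j)]
  let chainArcs : List (ℕ × ℕ) :=
    (List.range' 1 i1).flatMap fun j =>
      match (List.range' 2 (k-1)).find? (fun t => r t == j) with
      | some t => [(hv j, S' t), (S' t, nxt j)]
      | none => [(hv j, nxt j)]
  let sChain : List ℕ :=
    [P k] ++ (List.range' 2 (k-2)).map P ++ (if 2 ≤ n then [w] else []) ++ [S' k]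
  let sArcs : List (ℕ × ℕ) :=
    if 2 ≤ k then (sChain.zip sChain.tail) ++ (List.range' 2 (k-2)).map (fun j => (P j, S' j))
    else []
  let catArcs : List (ℕ × ℕ) :=
    if n ≤ 1 then []
    else if n = 2 then [(w, x 2)]
    else [(w, cv 2)] ++
      ((List.range' 2 (n-3)).flatMap fun i => [(cv i, x i), (cv i, cv (i+1))]) ++
      [(cv (n-1), x (n-1)), (cv (n-1), x n)]
  rootArcs ++ otherBeads ++ chainArcs ++ sArcs ++ catArcs

/-- The core network `B(m)` for a simple profile with first component `m1` on `n`
taxa. -/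
def BNet (m1 n : ℕ) : Net := mkNet (BArcs m1 n)

/-- The core network `B(m)` of a ploidy profile whose terminal element is `mt`,
together with its leaf indexing (leaf `0` is `x₁ = 0`, leaf `i` is `x_{i+1}`). -/
def BLNet (mt : List ℕ) : LNet where
  net := BNet mt.headI mt.length
  leaf := fun i => if i = 0 then 0 else xBase mt.headI + (i + 1)

/-- The naive realization of the simple profile `(m₁, 1, …, 1)` on `n` taxa: a
directed path `0, 1, …, n + 2m₁ - 3` (with `v_j = j - 1`, `w_i = m₁ + i - 3`,
`v_j' = n + 2m₁ - 3 - j` and `x₁ = n + 2m₁ - 3`) together with the arcs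
`(v_j, v_j')` and the pendant leaf arcs `(w_i, x_i)` with `x_i = n + 2m₁ + i`. -/
def naiveNet (m1 n : ℕ) : Net :=
  mkNet (((List.range (n + 2*m1 - 3)).map fun p => (p, p+1)) ++
    ((List.range' 1 (m1 - 1)).map fun j => (j - 1, n + 2*m1 - 3 - j)) ++
    ((List.range' 2 (n - 1)).map fun i => (m1 + i - 3, n + 2*m1 + i)))

/-! ### Cherry modification operations -/

/-- `reduce(a,b)`: delete the leaf `b` of the cherry `{a,b}` together with its
incoming arc and suppress the resulting degree-two vertex (collapsing the network
to the single vertex `a` when the common parent is the root). -/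
def ReduceOp (G G' : Net) : Prop :=
  ∃ a b p ea eb, a ≠ b ∧ IsLeafN G a ∧ IsLeafN G b ∧
    ArcFT G ea p a ∧ ArcFT G eb p b ∧ ea ≠ eb ∧
    G'.verts = (G.verts.erase b).erase p ∧
    G'.arcs = (G.arcs.erase eb).erase ea ∧
    ((IsRootN G p ∧ ∀ e ∈ G'.arcs, G'.src e = G.src e ∧ G'.tgt e = G.tgt e) ∨
     (∃ ep q, ArcFT G ep q p ∧
        (∀ e ∈ G'.arcs, e ≠ ep → G'.src e = G.src e ∧ G'.tgt e = G.tgt e) ∧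
        G'.src ep = q ∧ G'.tgt ep = a))

/-- `cut(a,b)`: delete the reticulation arc of the reticulate cherry `{a,b}` with
reticulation leaf `b`, suppressing the two resulting degree-two vertices. -/
def CutOp (G G' : Net) : Prop :=
  ∃ a b pa pb e1 e2 e3 e4 e5 q r,
    a ≠ b ∧ IsLeafN G a ∧ IsLeafN G b ∧ IsReticN G pb ∧
    ArcFT G e1 pa a ∧ ArcFT G e2 pb b ∧ ArcFT G e3 pa pb ∧
    ArcFT G e4 q pb ∧ e3 ≠ e4 ∧ ArcFT G e5 r pa ∧
    G'.verts = (G.verts.erase pa).erase pb ∧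
    G'.arcs = ((G.arcs.erase e3).erase e1).erase e2 ∧
    (∀ e ∈ G'.arcs, e ≠ e4 → e ≠ e5 → G'.src e = G.src e ∧ G'.tgt e = G.tgt e) ∧
    G'.src e5 = r ∧ G'.tgt e5 = a ∧
    G'.src e4 = q ∧ G'.tgt e4 = b

/-- `simp(a)`: for a type-1 degenerate cherry `{a}` (sole leaf whose parent is the
reticulation vertex of a bead), delete one arc of the bead, suppressing the
resulting degree-two vertex and collapsing the outgoing arc of the tree vertex of
the bead. -/
def SimpOp (G G' : Net) : Prop :=
  ∃ a h u e1 e2 e3,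
    IsLeafN G a ∧ (∀ w, IsLeafN G w → w = a) ∧ IsReticN G h ∧
    ArcFT G e1 u h ∧ ArcFT G e2 u h ∧ e1 ≠ e2 ∧ ArcFT G e3 h a ∧
    ((IsRootN G u ∧ G'.verts = {a} ∧ G'.arcs = ∅) ∨
     (∃ eu q, ArcFT G eu q u ∧
        G'.verts = (G.verts.erase h).erase u ∧
        G'.arcs = ((G.arcs.erase e2).erase e3).erase e1 ∧
        (∀ e ∈ G'.arcs, e ≠ eu → G'.src e = G.src e ∧ G'.tgt e = G.tgt e) ∧
        G'.src eu = q ∧ G'.tgt eu = a))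

/-- `trim(a)`: for a type-2 degenerate cherry `{a}` (sole leaf whose parent `p` is
a reticulation vertex with distinct parents `q₁, q₂`), delete the arc `(q₁,p)`
(case (a): there is a vertex `q` with arcs `(q,q₁)`, `(q,q₂)`, `(q₁,q₂)`),
respectively one of the two parallel arcs from `q` to `q₂` (case (b): there is an
arc `(q₁,q)` and a pair of parallel arcs from `q` to `q₂`), suppressing the two
resulting degree-two vertices. -/
def TrimOp (G G' : Net) : Prop :=
  ∃ a p g0, IsLeafN G a ∧ (∀ w, IsLeafN G w → w = a) ∧ IsReticN G p ∧ ArcFT G g0 p a ∧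
   ((∃ q q1 q2 f1 f2 f3 g1 g2,
      ArcFT G g1 q1 p ∧ ArcFT G g2 q2 p ∧ g1 ≠ g2 ∧ q1 ≠ q2 ∧
      ArcFT G f1 q q1 ∧ ArcFT G f2 q q2 ∧ ArcFT G f3 q1 q2 ∧
      G'.verts = (G.verts.erase q1).erase p ∧
      G'.arcs = ((G.arcs.erase g1).erase f3).erase g0 ∧
      (∀ e ∈ G'.arcs, e ≠ f1 → e ≠ g2 → G'.src e = G.src e ∧ G'.tgt e = G.tgt e) ∧
      G'.src f1 = q ∧ G'.tgt f1 = q2 ∧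
      G'.src g2 = q2 ∧ G'.tgt g2 = a) ∨
    (∃ q q1 q2 eq' f1 f2 g1 g2,
      ArcFT G g1 q1 p ∧ ArcFT G g2 q2 p ∧ g1 ≠ g2 ∧ q1 ≠ q2 ∧
      ArcFT G eq' q1 q ∧ ArcFT G f1 q q2 ∧ ArcFT G f2 q q2 ∧ f1 ≠ f2 ∧
      G'.verts = (G.verts.erase q).erase q2 ∧
      G'.arcs = ((G.arcs.erase f2).erase f1).erase g2 ∧
      (∀ e ∈ G'.arcs, e ≠ eq' → G'.src e = G.src e ∧ G'.tgt e = G.tgt e) ∧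
      G'.src eq' = q1 ∧ G'.tgt eq' = p))

/-- A single cherry modification operation: reduce, cut or simp. -/
def CherryModOp (G G' : Net) : Prop := ReduceOp G G' ∨ CutOp G G' ∨ SimpOp G G'

/-- A single weak cherry modification operation: reduce, cut, simp or trim. -/
def WeakCherryModOp (G G' : Net) : Prop := CherryModOp G G' ∨ TrimOp G G'

/-- The network consisting of a single vertex (and no arcs). -/
def IsSingleV (G : Net) : Prop := ∃ v, G.verts = {v} ∧ G.arcs = ∅

/-- `G` admits a complete cherry modification sequence, i.e. `G` is an orchard. -/
def IsOrchardN (G : Net) : Prop :=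
  ∃ G', Relation.ReflTransGen CherryModOp G G' ∧ IsSingleV G'

/-- `G` admits a complete weak cherry modification sequence, i.e. `G` is a weak
orchard. -/
def IsWeakOrchardN (G : Net) : Prop :=
  ∃ G', Relation.ReflTransGen WeakCherryModOp G G' ∧ IsSingleV G'

/-! ### The traceback through the simplification sequence -/

/-- Traceback step in case `α = 0`: replace the leaf indexing the first component
of `m''` by a cherry on two new leaves. -/
def CherryExpandOp (R'' R' : LNet) : Prop :=
  ∃ y1 y2 b1 b2,
    y1 ∉ R''.net.verts ∧ y2 ∉ R''.net.verts ∧ y1 ≠ y2 ∧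
    b1 ∉ R''.net.arcs ∧ b2 ∉ R''.net.arcs ∧ b1 ≠ b2 ∧
    R'.net.verts = R''.net.verts ∪ {y1, y2} ∧
    R'.net.arcs = R''.net.arcs ∪ {b1, b2} ∧
    (∀ a ∈ R''.net.arcs, R'.net.src a = R''.net.src a ∧ R'.net.tgt a = R''.net.tgt a) ∧
    R'.net.src b1 = R''.leaf 0 ∧ R'.net.tgt b1 = y1 ∧
    R'.net.src b2 = R''.leaf 0 ∧ R'.net.tgt b2 = y2 ∧
    R'.leaf 0 = y1 ∧ R'.leaf 1 = y2 ∧ (∀ i, 1 ≤ i → R'.leaf (i + 1) = R''.leaf i)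

/-- Traceback step in case `α > m₂'`: subdivide the incoming arcs of the leaves
indexing the first and second components of `m''` by new vertices `u` and `v` and
add the arc `(v,u)`. -/
def AddArcOp (R'' R' : LNet) : Prop :=
  ∃ u v a0 a1 b0 b1 c,
    u ∉ R''.net.verts ∧ v ∉ R''.net.verts ∧ u ≠ v ∧
    a0 ∈ R''.net.arcs ∧ R''.net.tgt a0 = R''.leaf 0 ∧
    a1 ∈ R''.net.arcs ∧ R''.net.tgt a1 = R''.leaf 1 ∧ a0 ≠ a1 ∧
    b0 ∉ R''.net.arcs ∧ b1 ∉ R''.net.arcs ∧ c ∉ R''.net.arcs ∧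
    b0 ≠ b1 ∧ b0 ≠ c ∧ b1 ≠ c ∧
    R'.net.verts = R''.net.verts ∪ {u, v} ∧
    R'.net.arcs = R''.net.arcs ∪ {b0, b1, c} ∧
    (∀ a ∈ R''.net.arcs, a ≠ a0 → a ≠ a1 →
        R'.net.src a = R''.net.src a ∧ R'.net.tgt a = R''.net.tgt a) ∧
    R'.net.src a0 = R''.net.src a0 ∧ R'.net.tgt a0 = u ∧
    R'.net.src a1 = R''.net.src a1 ∧ R'.net.tgt a1 = v ∧
    R'.net.src b0 = u ∧ R'.net.tgt b0 = R''.leaf 0 ∧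
    R'.net.src b1 = v ∧ R'.net.tgt b1 = R''.leaf 1 ∧
    R'.net.src c = v ∧ R'.net.tgt c = u ∧
    (∀ i, R'.leaf i = R''.leaf i)

/-- Traceback step in case `0 < α ≤ m₂'`, where the inserted component `α` sits at
(0-based) position `j` of `m''`: subdivide the incoming arc of the leaf indexing
`α` by a vertex `v`, replace the leaf indexing the first component of `m''` by a
cherry, subdivide the incoming arc of one of the two new cherry leaves by a vertex
`u`, add the arc `(v,u)` and delete the leaf indexing `α` together with its
incoming arc, suppressing the resulting degree-two vertex. -/
def InsertBackOp (j : ℕ) (R'' R' : LNet) : Prop :=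
  ∃ u y1 y2 c1 c2 c3 az,
    u ∉ R''.net.verts ∧ y1 ∉ R''.net.verts ∧ y2 ∉ R''.net.verts ∧
    u ≠ y1 ∧ u ≠ y2 ∧ y1 ≠ y2 ∧
    c1 ∉ R''.net.arcs ∧ c2 ∉ R''.net.arcs ∧ c3 ∉ R''.net.arcs ∧
    c1 ≠ c2 ∧ c1 ≠ c3 ∧ c2 ≠ c3 ∧
    az ∈ R''.net.arcs ∧ R''.net.tgt az = R''.leaf j ∧
    R'.net.verts = (R''.net.verts.erase (R''.leaf j)) ∪ {u, y1, y2} ∧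
    R'.net.arcs = R''.net.arcs ∪ {c1, c2, c3} ∧
    (∀ a ∈ R''.net.arcs, a ≠ az →
        R'.net.src a = R''.net.src a ∧ R'.net.tgt a = R''.net.tgt a) ∧
    R'.net.src az = R''.net.src az ∧ R'.net.tgt az = u ∧
    R'.net.src c1 = R''.leaf 0 ∧ R'.net.tgt c1 = u ∧
    R'.net.src c2 = u ∧ R'.net.tgt c2 = y1 ∧
    R'.net.src c3 = R''.leaf 0 ∧ R'.net.tgt c3 = y2 ∧
    R'.leaf 0 = y1 ∧ R'.leaf 1 = y2 ∧
    (∀ i, 1 ≤ i → i < j → R'.leaf (i + 1) = R''.leaf i) ∧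
    (∀ i, j < i → R'.leaf i = R''.leaf i)

/-- One step of the traceback: `R'` is a realization of the non-simple profile `m'`
obtained from the realization `R''` of `simpStep m'` by the surgery dictated by the
case (`α = 0`, `α > m₂'` or `0 < α ≤ m₂'`) that produced `simpStep m'` from `m'`. -/
def TraceStep (m' : List ℕ) (R'' R' : LNet) : Prop :=
  2 ≤ m'.length ∧ ¬ IsSimpleP m' ∧
  ((m'.headI = m'.tail.headI ∧ CherryExpandOp R'' R') ∨
   (m'.tail.headI < m'.headI - m'.tail.headI ∧ AddArcOp R'' R') ∨
   (0 < m'.headI - m'.tail.headI ∧ m'.headI - m'.tail.headI ≤ m'.tail.headI ∧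
     InsertBackOp
       ((m'.tail.takeWhile fun y => decide (m'.headI - m'.tail.headI ≤ y)).length)
       R'' R'))

/-- `TracebackFrom core m N`: `N` is a network `N(m)` obtainable by the traceback
through the simplification sequence of `m`, initialized with the core network
`core`. -/
inductive TracebackFrom (core : LNet) : List ℕ → LNet → Prop
  | base (m : List ℕ) : IsSimpleP m → TracebackFrom core m core
  | step (m' : List ℕ) (R'' R' : LNet) :
      TracebackFrom core (simpStep m') R'' → TraceStep m' R'' R' →
      TracebackFrom core m' R'

/-! ### Tree-based and tree-child networks -/

def subIn (G : Net) (A : Finset ℕ) (v : ℕ) : ℕ := (A.filter fun a => G.tgt a = v).card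
def subOut (G : Net) (A : Finset ℕ) (v : ℕ) : ℕ := (A.filter fun a => G.src a = v).card

/-- `G` is tree-based: some subset `A` of its arcs forms a spanning subdivision of a
rooted phylogenetic tree (with one extra incoming arc added to its root) whose
leaves are exactly the leaves of `G`; all remaining arcs of `G` join subdivision
vertices, and every subdivision vertex has total degree 3 in `G`. -/
def IsTreeBased (G : Net) : Prop :=
  ∃ A : Finset ℕ, A ⊆ G.arcs ∧
    (∃! r, r ∈ G.verts ∧ subIn G A r = 0) ∧
    (∀ r ∈ G.verts, subIn G A r = 0 → subOut G A r = 1) ∧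
    (∀ v ∈ G.verts,
        (subIn G A v = 0 ∧ subOut G A v = 1) ∨ (subIn G A v = 1 ∧ subOut G A v = 0) ∨
        (subIn G A v = 1 ∧ subOut G A v = 1) ∨ (subIn G A v = 1 ∧ subOut G A v = 2)) ∧
    (∀ v ∈ G.verts, subIn G A v = 1 → subOut G A v = 0 → IsLeafN G v) ∧
    (∀ v, IsLeafN G v → subIn G A v = 1 ∧ subOut G A v = 0) ∧
    (∀ a ∈ G.arcs, a ∉ A →
        subIn G A (G.src a) = 1 ∧ subOut G A (G.src a) = 1 ∧
        subIn G A (G.tgt a) = 1 ∧ subOut G A (G.tgt a) = 1) ∧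
    (∀ v ∈ G.verts, subIn G A v = 1 → subOut G A v = 1 → inDeg G v + outDeg G v = 3)

/-- `G` is tree-child (reticulation vertices contained in beads being ignored):
every vertex has a directed path to a leaf on which every vertex except possibly
the first one is either not a reticulation vertex or is contained in a bead. -/
def IsTreeChild (G : Net) : Prop :=
  ∀ v ∈ G.verts, ∃ (l : List ℕ) (w : ℕ), IsWalk G l v w ∧ IsLeafN G w ∧
    ∀ a ∈ l, IsReticN G (G.tgt a) → InBead G (G.tgt a)

/-! ### Multiple-labelled networks and the split operation -/

/-- A multiple-labelled network: a network together with a labelling map assigning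
to each leaf vertex the (0-based) position of the profile component it is labelled
with; distinct leaves may carry the same label. -/
structure MLNet where
  net : Net
  lab : ℕ → ℕ

/-- A multiple-labelled tree: a multiple-labelled network without reticulation
vertices. -/
def IsMLTree (R : MLNet) : Prop := ∀ v, ¬ IsReticN R.net v

/-- The multiple-labelled network `R` realizes the ploidy profile `m`: for every
position `i` of `m`, the total number of directed paths from the root to leaves
labelled `i` equals the `i`-th component of `m`. -/
def MLRealizes (R : MLNet) (m : List ℕ) : Prop :=
  IsPhylo R.net ∧
  (∀ v, IsLeafN R.net v → R.lab v < m.length) ∧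
  (∀ i < m.length, ∀ r, IsRootN R.net r →
      (∑ v ∈ R.net.verts.filter (fun v => IsLeafN R.net v ∧ R.lab v = i),
          nPaths R.net r v) = m.getD i 0)

/-- The arcs of the subgraph induced by the vertices below `c`. -/
def arcsBelow (G : Net) (c : ℕ) : Set ℕ :=
  {b | b ∈ G.arcs ∧ BelowV G c (G.src b) ∧ BelowV G c (G.tgt b)}

/-- `a` is a cut-arc of `G`: removing it disconnects its end vertices in the
underlying undirected graph. -/
def IsCutArc (G : Net) (a : ℕ) : Prop :=
  a ∈ G.arcs ∧
    ¬ Relation.ReflTransGen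
        (fun x y => ∃ b ∈ G.arcs, b ≠ a ∧
          ((G.src b = x ∧ G.tgt b = y) ∨ (G.src b = y ∧ G.tgt b = x)))
        (G.src a) (G.tgt a)

/-- The split operation: `R'` is obtained from `R` by deleting a reticulation
vertex `h` (with parents `p₁, p₂` and child `c`, where `(h,c)` is a cut-arc)
together with its three incident arcs, making a disjoint copy (via `φ` on vertices
and `ψ` on arcs) of the subgraph induced by the vertices below `c`, and attaching
one copy of `c` to `p₁` by an arc `(p₁,c)` and the other to `p₂` by an arc
`(p₂,c)`. -/
def SplitRel (R R' : MLNet) : Prop :=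
  ∃ (h p1 p2 c a0 a1 a2 : ℕ) (φ ψ : ℕ → ℕ),
    IsReticN R.net h ∧
    ArcFT R.net a0 h c ∧ IsCutArc R.net a0 ∧
    ArcFT R.net a1 p1 h ∧ ArcFT R.net a2 p2 h ∧
    a1 ≠ a2 ∧ a0 ≠ a1 ∧ a0 ≠ a2 ∧
    Set.InjOn φ {w | BelowV R.net c w} ∧
    (∀ w, BelowV R.net c w → φ w ∉ R.net.verts) ∧
    Set.InjOn ψ (arcsBelow R.net c) ∧
    (∀ b ∈ arcsBelow R.net c, ψ b ∉ R.net.arcs) ∧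
    (↑R'.net.verts : Set ℕ) =
      ((↑R.net.verts : Set ℕ) \ {h}) ∪ (φ '' {w | BelowV R.net c w}) ∧
    (↑R'.net.arcs : Set ℕ) =
      ((↑R.net.arcs : Set ℕ) \ {a0}) ∪ (ψ '' arcsBelow R.net c) ∧
    (∀ b ∈ R.net.arcs, b ≠ a0 → b ≠ a1 → b ≠ a2 →
        R'.net.src b = R.net.src b ∧ R'.net.tgt b = R.net.tgt b) ∧
    R'.net.src a1 = p1 ∧ R'.net.tgt a1 = c ∧
    R'.net.src a2 = p2 ∧ R'.net.tgt a2 = φ c ∧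
    (∀ b ∈ arcsBelow R.net c,
        R'.net.src (ψ b) = φ (R.net.src b) ∧ R'.net.tgt (ψ b) = φ (R.net.tgt b)) ∧
    (∀ v ∈ R.net.verts, v ≠ h → R'.lab v = R.lab v) ∧
    (∀ w, BelowV R.net c w → R'.lab (φ w) = R.lab w)

/-- Adjacency in ploidy profile space `𝒫(m)` (relative to an edit distance `D` on
multiple-labelled trees): both endpoints realize `m` and either one is obtained
from the other by a single split operation, or both are multiple-labelled trees at
`D`-distance 1. -/
def PEdge (m : List ℕ) (D : MLNet → MLNet → ℕ) (A B : MLNet) : Prop :=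
  MLRealizes A m ∧ MLRealizes B m ∧
    (SplitRel A B ∨ SplitRel B A ∨ (IsMLTree A ∧ IsMLTree B ∧ D A B = 1))

/-! ### Auxiliary: generic walk lemmas -/

lemma isWalk_end_mem {G : Net} : ∀ {l : List ℕ} {u v : ℕ}, IsWalk G l u v → v ∈ G.verts := by
  intro l
  induction l with
  | nil => intro u v h; exact h.1 ▸ h.2
  | cons a l ih => intro u v h; exact ih h.2.2

lemma isWalk_append_arc {G : Net} (htgt : ∀ a ∈ G.arcs, G.tgt a ∈ G.verts) :
    ∀ {l : List ℕ} {u w : ℕ} {a : ℕ}, IsWalk G l u w → a ∈ G.arcs → G.src a = w →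
      IsWalk G (l ++ [a]) u (G.tgt a) := by
  intro l
  induction l with
  | nil =>
    intro u w a h ha hs
    obtain ⟨rfl, _⟩ := h
    exact ⟨ha, hs, rfl, htgt a ha⟩
  | cons b l ih =>
    intro u w a h ha hs
    exact ⟨h.1, h.2.1, ih h.2.2 ha hs⟩

lemma isWalk_decomp {G : Net} (hsrc : ∀ a ∈ G.arcs, G.src a ∈ G.verts) :
    ∀ {l : List ℕ} {u v : ℕ}, IsWalk G l u v → l ≠ [] →
      ∃ l' a, l = l' ++ [a] ∧ a ∈ G.arcs ∧ G.tgt a = v ∧ IsWalk G l' u (G.src a) := by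
  intro l
  induction l with
  | nil => intro u v _ h; exact absurd rfl h
  | cons b l ih =>
    intro u v h _
    obtain ⟨hb, hsb, hw⟩ := h
    rcases eq_or_ne l [] with rfl | hl
    · obtain ⟨rfl, _⟩ := hw
      exact ⟨[], b, rfl, hb, rfl, hsb.symm, hsb ▸ hsrc b hb⟩
    · obtain ⟨l', a, rfl, ha, hta, hw'⟩ := ih hw hl
      exact ⟨b :: l', a, rfl, ha, hta, hb, hsb, hw'⟩

lemma isWalk_le {G : Net} (hlt : ∀ a ∈ G.arcs, G.src a < G.tgt a) :
    ∀ {l : List ℕ} {u v : ℕ}, IsWalk G l u v → u ≤ v := by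
  intro l
  induction l with
  | nil => intro u v h; exact h.1.le
  | cons a l ih => intro u v h; exact le_trans (le_of_lt (h.2.1 ▸ hlt a h.1)) (ih h.2.2)

lemma isWalk_lt {G : Net} (hlt : ∀ a ∈ G.arcs, G.src a < G.tgt a)
    {l : List ℕ} {u v : ℕ} (h : IsWalk G l u v) (hne : l ≠ []) : u < v := by
  cases l with
  | nil => exact absurd rfl hne
  | cons a l =>
    exact lt_of_lt_of_le (h.2.1 ▸ hlt a h.1) (isWalk_le hlt h.2.2)

lemma walks_self {G : Net} (hlt : ∀ a ∈ G.arcs, G.src a < G.tgt a) {u : ℕ} (hu : u ∈ G.verts) :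
    {l : List ℕ | IsWalk G l u u} = {[]} := by
  ext l
  simp only [Set.mem_setOf_eq, Set.mem_singleton_iff]
  constructor
  · intro h
    by_contra hne
    exact absurd (isWalk_lt hlt h hne) (lt_irrefl u)
  · rintro rfl; exact ⟨rfl, hu⟩

lemma walks_single {G : Net} (hsrc : ∀ a ∈ G.arcs, G.src a ∈ G.verts)
    (htgt : ∀ a ∈ G.arcs, G.tgt a ∈ G.verts) {v a₀ u : ℕ}
    (hv : ∀ a ∈ G.arcs, G.tgt a = v ↔ a = a₀) (ha₀ : a₀ ∈ G.arcs) (hne : u ≠ v) :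
    {l : List ℕ | IsWalk G l u v} = (fun l => l ++ [a₀]) '' {l | IsWalk G l u (G.src a₀)} := by
  ext l
  simp only [Set.mem_setOf_eq, Set.mem_image]
  constructor
  · intro h
    have hl : l ≠ [] := by rintro rfl; exact hne (h.1)
    obtain ⟨l', a, rfl, ha, hta, hw⟩ := isWalk_decomp hsrc h hl
    have : a = a₀ := (hv a ha).1 hta
    subst this
    exact ⟨l', hw, rfl⟩
  · rintro ⟨l', hw, rfl⟩
    have := isWalk_append_arc htgt hw ha₀ rfl
    rwa [(hv a₀ ha₀).2 rfl] at this

lemma walks_double {G : Net} (hsrc : ∀ a ∈ G.arcs, G.src a ∈ G.verts)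
    (htgt : ∀ a ∈ G.arcs, G.tgt a ∈ G.verts) {v a₀ a₁ u : ℕ}
    (hv : ∀ a ∈ G.arcs, G.tgt a = v ↔ (a = a₀ ∨ a = a₁)) (ha₀ : a₀ ∈ G.arcs)
    (ha₁ : a₁ ∈ G.arcs) (hne : u ≠ v) :
    {l : List ℕ | IsWalk G l u v} =
      (fun l => l ++ [a₀]) '' {l | IsWalk G l u (G.src a₀)} ∪
      (fun l => l ++ [a₁]) '' {l | IsWalk G l u (G.src a₁)} := by
  ext l
  simp only [Set.mem_setOf_eq, Set.mem_union, Set.mem_image]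
  constructor
  · intro h
    have hl : l ≠ [] := by rintro rfl; exact hne (h.1)
    obtain ⟨l', a, rfl, ha, hta, hw⟩ := isWalk_decomp hsrc h hl
    rcases (hv a ha).1 hta with rfl | rfl
    · exact Or.inl ⟨l', hw, rfl⟩
    · exact Or.inr ⟨l', hw, rfl⟩
  · rintro (⟨l', hw, rfl⟩ | ⟨l', hw, rfl⟩)
    · have := isWalk_append_arc htgt hw ha₀ rfl
      rwa [(hv a₀ ha₀).2 (Or.inl rfl)] at this
    · have := isWalk_append_arc htgt hw ha₁ rfl
      rwa [(hv a₁ ha₁).2 (Or.inr rfl)] at this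

lemma snoc_injective (a : ℕ) : Function.Injective (fun l : List ℕ => l ++ [a]) := by
  intro x y h
  simpa using h

lemma snoc_images_disjoint {a b : ℕ} (hab : a ≠ b) (S T : Set (List ℕ)) :
    Disjoint ((fun l => l ++ [a]) '' S) ((fun l => l ++ [b]) '' T) := by
  rw [Set.disjoint_left]
  rintro l ⟨x, _, rfl⟩ ⟨y, _, h⟩
  have : b = a := by
    have := congrArg (fun l : List ℕ => l.getLast?) h
    simpa using this
  exact hab this.symm
lemma isWalk_arcs_mem {G : Net} :
    ∀ {l : List ℕ} {u v : ℕ}, IsWalk G l u v → ∀ a ∈ l, a ∈ G.arcs := by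
  intro l
  induction l with
  | nil => intro u v _ a ha; simp at ha
  | cons b l ih =>
    intro u v h a ha
    rcases List.mem_cons.1 ha with rfl | ha'
    · exact h.1
    · exact ih h.2.2 a ha'

lemma isWalk_append {G : Net} :
    ∀ {l l' : List ℕ} {u w x : ℕ}, IsWalk G l u w → IsWalk G l' w x →
      IsWalk G (l ++ l') u x := by
  intro l
  induction l with
  | nil => intro l' u w x h h'; rw [List.nil_append]; rw [h.1]; exact h'
  | cons a l ih => intro l' u w x h h'; exact ⟨h.1, h.2.1, ih h.2.2 h'⟩
/-! ### The explicit tree-child realization of `(2^n, …, 2^0)` -/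

def gad (k : ℕ) : List (ℕ × ℕ) :=
  [(4*k, 4*k+1), (4*k, 4*k+2), (4*k+1, 4*k+2), (4*k+1, 4*k+3), (4*k+2, 4*k+4)]

def TA (n : ℕ) : List (ℕ × ℕ) := (List.range n).flatMap gad

def TNet (n : ℕ) : Net := mkNet (TA n)

lemma TA_succ (n : ℕ) : TA (n+1) = TA n ++ gad n := by
  simp [TA, List.range_succ]

lemma TA_length (n : ℕ) : (TA n).length = 5*n := by
  induction n with
  | zero => rfl
  | succ n ih => rw [TA_succ]; simp [ih, gad]; ring

lemma TA_getD {n k r : ℕ} (hk : k < n) (hr : r < 5) :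
    (TA n).getD (5*k+r) (0,0) = (gad k).getD r (0,0) := by
  induction n with
  | zero => omega
  | succ n ih =>
    rw [TA_succ]
    rcases Nat.lt_or_ge k n with h | h
    · rw [List.getD_append _ _ _ _ (by rw [TA_length]; omega)]
      exact ih h
    · have hkn : k = n := by omega
      subst hkn
      rw [List.getD_append_right _ _ _ _ (by rw [TA_length]; omega), TA_length]
      congr 1
      omega

def srcd (i : ℕ) : ℕ := 4*(i/5) + (if i % 5 ≤ 1 then 0 else if i % 5 ≤ 3 then 1 else 2)

def tgtd (i : ℕ) : ℕ :=
  4*(i/5) + (if i % 5 = 0 then 1 else if i % 5 ≤ 2 then 2 else if i % 5 = 3 then 3 else 4)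

lemma srcd_eq (i v : ℕ) : srcd i = v ↔
    ((i % 5 ≤ 1 ∧ v = 4*(i/5)) ∨ (2 ≤ i % 5 ∧ i % 5 ≤ 3 ∧ v = 4*(i/5)+1) ∨
      (i % 5 = 4 ∧ v = 4*(i/5)+2)) := by
  have h5 : i % 5 = 0 ∨ i % 5 = 1 ∨ i % 5 = 2 ∨ i % 5 = 3 ∨ i % 5 = 4 := by omega
  rcases h5 with h | h | h | h | h <;> simp [srcd, h] <;> omega

lemma tgtd_eq (i v : ℕ) : tgtd i = v ↔
    ((i % 5 = 0 ∧ v = 4*(i/5)+1) ∨ (1 ≤ i % 5 ∧ i % 5 ≤ 2 ∧ v = 4*(i/5)+2) ∨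
      (i % 5 = 3 ∧ v = 4*(i/5)+3) ∨ (i % 5 = 4 ∧ v = 4*(i/5)+4)) := by
  have h5 : i % 5 = 0 ∨ i % 5 = 1 ∨ i % 5 = 2 ∨ i % 5 = 3 ∨ i % 5 = 4 := by omega
  rcases h5 with h | h | h | h | h <;> simp [tgtd, h] <;> omega

lemma TNet_arcs (n : ℕ) : (TNet n).arcs = Finset.range (5*n) := by
  simp [TNet, mkNet, TA_length]

lemma TNet_srctgt {n i : ℕ} (hi : i < 5*n) :
    (TNet n).src i = srcd i ∧ (TNet n).tgt i = tgtd i := by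
  have hk : i / 5 < n := by omega
  have hr : i % 5 < 5 := by omega
  have hi' : 5*(i/5) + i%5 = i := by omega
  have hget : (TA n).getD i (0,0) = (gad (i/5)).getD (i%5) (0,0) := by
    conv_lhs => rw [← hi']
    exact TA_getD hk hr
  have hsrc : (TNet n).src i = ((TA n).getD i (0,0)).1 := rfl
  have htgt : (TNet n).tgt i = ((TA n).getD i (0,0)).2 := rfl
  rw [hsrc, htgt, hget]
  have h5 : i % 5 = 0 ∨ i % 5 = 1 ∨ i % 5 = 2 ∨ i % 5 = 3 ∨ i % 5 = 4 := by omega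
  rcases h5 with h | h | h | h | h <;> rw [h] <;> simp [gad, srcd, tgtd, h]

lemma TNet_src {n i : ℕ} (hi : i < 5*n) : (TNet n).src i = srcd i := (TNet_srctgt hi).1
lemma TNet_tgt {n i : ℕ} (hi : i < 5*n) : (TNet n).tgt i = tgtd i := (TNet_srctgt hi).2

lemma mem_TA {n : ℕ} {p : ℕ × ℕ} : p ∈ TA n ↔ ∃ k < n, p ∈ gad k := by
  simp [TA, List.mem_flatMap, List.mem_range]

lemma TNet_verts {n : ℕ} (hn : 1 ≤ n) {v : ℕ} : v ∈ (TNet n).verts ↔ v ≤ 4*n := by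
  have hmem : v ∈ (TNet n).verts ↔
      (∃ p ∈ TA n, p.1 = v) ∨ (∃ p ∈ TA n, p.2 = v) := by
    simp [TNet, mkNet, List.mem_toFinset, List.mem_append, List.mem_map]
  rw [hmem]
  constructor
  · rintro (⟨p, hp, rfl⟩ | ⟨p, hp, rfl⟩) <;>
    · obtain ⟨k, hk, hpg⟩ := mem_TA.1 hp
      simp [gad] at hpg
      rcases hpg with h | h | h | h | h <;> subst h <;> simp <;> omega
  · intro hv
    rcases Nat.eq_zero_or_pos v with rfl | hpos
    · exact Or.inl ⟨(0, 1), mem_TA.2 ⟨0, hn, by simp [gad]⟩, rfl⟩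
    · right
      set k := (v-1)/4 with hkdef
      have hk : k < n := by omega
      have h4 : v = 4*k+1 ∨ v = 4*k+2 ∨ v = 4*k+3 ∨ v = 4*k+4 := by omega
      rcases h4 with h | h | h | h
      · exact ⟨(4*k, 4*k+1), mem_TA.2 ⟨k, hk, by simp [gad]⟩, h.symm⟩
      · exact ⟨(4*k, 4*k+2), mem_TA.2 ⟨k, hk, by simp [gad]⟩, h.symm⟩
      · exact ⟨(4*k+1, 4*k+3), mem_TA.2 ⟨k, hk, by simp [gad]⟩, h.symm⟩
      · exact ⟨(4*k+2, 4*k+4), mem_TA.2 ⟨k, hk, by simp [gad]⟩, h.symm⟩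
lemma srcd_v0 (k : ℕ) : srcd (5*k) = 4*k := (srcd_eq _ _).2 (by omega)
lemma srcd_v1 (k : ℕ) : srcd (5*k+1) = 4*k := (srcd_eq _ _).2 (by omega)
lemma srcd_v2 (k : ℕ) : srcd (5*k+2) = 4*k+1 := (srcd_eq _ _).2 (by omega)
lemma srcd_v3 (k : ℕ) : srcd (5*k+3) = 4*k+1 := (srcd_eq _ _).2 (by omega)
lemma srcd_v4 (k : ℕ) : srcd (5*k+4) = 4*k+2 := (srcd_eq _ _).2 (by omega)
lemma tgtd_v0 (k : ℕ) : tgtd (5*k) = 4*k+1 := (tgtd_eq _ _).2 (by omega)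
lemma tgtd_v1 (k : ℕ) : tgtd (5*k+1) = 4*k+2 := (tgtd_eq _ _).2 (by omega)
lemma tgtd_v2 (k : ℕ) : tgtd (5*k+2) = 4*k+2 := (tgtd_eq _ _).2 (by omega)
lemma tgtd_v3 (k : ℕ) : tgtd (5*k+3) = 4*k+3 := (tgtd_eq _ _).2 (by omega)
lemma tgtd_v4 (k : ℕ) : tgtd (5*k+4) = 4*k+4 := (tgtd_eq _ _).2 (by omega)

lemma inDeg_T (n v : ℕ) :
    inDeg (TNet n) v = ((Finset.range (5*n)).filter fun i => tgtd i = v).card := by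
  unfold inDeg
  rw [TNet_arcs]
  congr 1
  apply Finset.filter_congr
  intro i hi
  rw [TNet_tgt (Finset.mem_range.1 hi)]

lemma outDeg_T (n v : ℕ) :
    outDeg (TNet n) v = ((Finset.range (5*n)).filter fun i => srcd i = v).card := by
  unfold outDeg
  rw [TNet_arcs]
  congr 1
  apply Finset.filter_congr
  intro i hi
  rw [TNet_src (Finset.mem_range.1 hi)]

lemma filt_tgt_zero (n : ℕ) : ((Finset.range (5*n)).filter fun i => tgtd i = 0) = ∅ := by
  ext i; simp only [Finset.mem_filter, Finset.mem_range, Finset.notMem_empty, iff_false,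
    not_and, tgtd_eq]; omega

lemma filt_tgt_r0 {n k : ℕ} (hk1 : 1 ≤ k) (hk : k ≤ n) :
    ((Finset.range (5*n)).filter fun i => tgtd i = 4*k) = {5*k-1} := by
  ext i; simp only [Finset.mem_filter, Finset.mem_range, Finset.mem_singleton, tgtd_eq]; omega

lemma filt_tgt_r1 {n k : ℕ} (hk : k < n) :
    ((Finset.range (5*n)).filter fun i => tgtd i = 4*k+1) = {5*k} := by
  ext i; simp only [Finset.mem_filter, Finset.mem_range, Finset.mem_singleton, tgtd_eq]; omega

lemma filt_tgt_r2 {n k : ℕ} (hk : k < n) :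
    ((Finset.range (5*n)).filter fun i => tgtd i = 4*k+2) = {5*k+1, 5*k+2} := by
  ext i; simp only [Finset.mem_filter, Finset.mem_range, Finset.mem_insert,
    Finset.mem_singleton, tgtd_eq]; omega

lemma filt_tgt_r3 {n k : ℕ} (hk : k < n) :
    ((Finset.range (5*n)).filter fun i => tgtd i = 4*k+3) = {5*k+3} := by
  ext i; simp only [Finset.mem_filter, Finset.mem_range, Finset.mem_singleton, tgtd_eq]; omega

lemma filt_src_r0 {n k : ℕ} (hk : k < n) :
    ((Finset.range (5*n)).filter fun i => srcd i = 4*k) = {5*k, 5*k+1} := by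
  ext i; simp only [Finset.mem_filter, Finset.mem_range, Finset.mem_insert,
    Finset.mem_singleton, srcd_eq]; omega

lemma filt_src_top (n : ℕ) : ((Finset.range (5*n)).filter fun i => srcd i = 4*n) = ∅ := by
  ext i; simp only [Finset.mem_filter, Finset.mem_range, Finset.notMem_empty, iff_false,
    not_and, srcd_eq]; omega

lemma filt_src_r1 {n k : ℕ} (hk : k < n) :
    ((Finset.range (5*n)).filter fun i => srcd i = 4*k+1) = {5*k+2, 5*k+3} := by
  ext i; simp only [Finset.mem_filter, Finset.mem_range, Finset.mem_insert,
    Finset.mem_singleton, srcd_eq]; omega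

lemma filt_src_r2 {n k : ℕ} (hk : k < n) :
    ((Finset.range (5*n)).filter fun i => srcd i = 4*k+2) = {5*k+4} := by
  ext i; simp only [Finset.mem_filter, Finset.mem_range, Finset.mem_singleton, srcd_eq]; omega

lemma filt_src_r3 (n k : ℕ) : ((Finset.range (5*n)).filter fun i => srcd i = 4*k+3) = ∅ := by
  ext i; simp only [Finset.mem_filter, Finset.mem_range, Finset.notMem_empty, iff_false,
    not_and, srcd_eq]; omega

lemma inDeg_T0 (n : ℕ) : inDeg (TNet n) 0 = 0 := by
  rw [inDeg_T, filt_tgt_zero]; rfl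

lemma inDeg_T_r0 {n k : ℕ} (hk1 : 1 ≤ k) (hk : k ≤ n) : inDeg (TNet n) (4*k) = 1 := by
  rw [inDeg_T, filt_tgt_r0 hk1 hk]; simp

lemma inDeg_T_r1 {n k : ℕ} (hk : k < n) : inDeg (TNet n) (4*k+1) = 1 := by
  rw [inDeg_T, filt_tgt_r1 hk]; simp

lemma inDeg_T_r2 {n k : ℕ} (hk : k < n) : inDeg (TNet n) (4*k+2) = 2 := by
  rw [inDeg_T, filt_tgt_r2 hk]; rw [Finset.card_pair (by omega)]

lemma inDeg_T_r3 {n k : ℕ} (hk : k < n) : inDeg (TNet n) (4*k+3) = 1 := by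
  rw [inDeg_T, filt_tgt_r3 hk]; simp

lemma outDeg_T_r0 {n k : ℕ} (hk : k < n) : outDeg (TNet n) (4*k) = 2 := by
  rw [outDeg_T, filt_src_r0 hk]; rw [Finset.card_pair (by omega)]

lemma outDeg_T_top (n : ℕ) : outDeg (TNet n) (4*n) = 0 := by
  rw [outDeg_T, filt_src_top]; rfl

lemma outDeg_T_r1 {n k : ℕ} (hk : k < n) : outDeg (TNet n) (4*k+1) = 2 := by
  rw [outDeg_T, filt_src_r1 hk]; rw [Finset.card_pair (by omega)]

lemma outDeg_T_r2 {n k : ℕ} (hk : k < n) : outDeg (TNet n) (4*k+2) = 1 := by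
  rw [outDeg_T, filt_src_r2 hk]; simp

lemma outDeg_T_r3 (n k : ℕ) : outDeg (TNet n) (4*k+3) = 0 := by
  rw [outDeg_T, filt_src_r3]; rfl

lemma TNet_lt {n : ℕ} : ∀ a ∈ (TNet n).arcs, (TNet n).src a < (TNet n).tgt a := by
  intro a ha
  rw [TNet_arcs, Finset.mem_range] at ha
  rw [TNet_src ha, TNet_tgt ha]
  have h1 := (srcd_eq a (srcd a)).1 rfl
  have h2 := (tgtd_eq a (tgtd a)).1 rfl
  omega

lemma TNet_src_mem {n : ℕ} (hn : 1 ≤ n) :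
    ∀ a ∈ (TNet n).arcs, (TNet n).src a ∈ (TNet n).verts := by
  intro a ha
  rw [TNet_arcs, Finset.mem_range] at ha
  rw [TNet_src ha, TNet_verts hn]
  have h1 := (srcd_eq a (srcd a)).1 rfl
  omega

lemma TNet_tgt_mem {n : ℕ} (hn : 1 ≤ n) :
    ∀ a ∈ (TNet n).arcs, (TNet n).tgt a ∈ (TNet n).verts := by
  intro a ha
  rw [TNet_arcs, Finset.mem_range] at ha
  rw [TNet_tgt ha, TNet_verts hn]
  have h2 := (tgtd_eq a (tgtd a)).1 rfl
  omega

lemma TNet_inDeg_pos {n v : ℕ} (hn : 1 ≤ n) (hv : v ≤ 4*n) (h0 : v ≠ 0) :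
    inDeg (TNet n) v ≠ 0 := by
  have h4 : v % 4 = 0 ∨ v % 4 = 1 ∨ v % 4 = 2 ∨ v % 4 = 3 := by omega
  have hv4 : v = 4*(v/4) + v % 4 := by omega
  rcases h4 with h | h | h | h
  · rw [show v = 4*(v/4) by omega, inDeg_T_r0 (by omega) (by omega)]; omega
  · rw [show v = 4*(v/4)+1 by omega, inDeg_T_r1 (by omega)]; omega
  · rw [show v = 4*(v/4)+2 by omega, inDeg_T_r2 (by omega)]; omega
  · rw [show v = 4*(v/4)+3 by omega, inDeg_T_r3 (by omega)]; omega

lemma TNet_root_eq {n r : ℕ} (hn : 1 ≤ n) (hr : IsRootN (TNet n) r) : r = 0 := by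
  obtain ⟨hmem, hdeg⟩ := hr
  rw [TNet_verts hn] at hmem
  by_contra h0
  exact TNet_inDeg_pos hn hmem h0 hdeg

lemma TNet_phylo {n : ℕ} (hn : 1 ≤ n) : IsPhylo (TNet n) where
  src_mem := TNet_src_mem hn
  tgt_mem := TNet_tgt_mem hn
  no_loop := fun a ha => Nat.ne_of_lt (TNet_lt a ha)
  acyclic := fun v l hl hw => absurd (isWalk_lt TNet_lt hw hl) (lt_irrefl v)
  root_exu := by
    refine ⟨0, ⟨(TNet_verts hn).2 (by omega), inDeg_T0 n⟩, fun r hr => TNet_root_eq hn hr⟩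
  root_out := by
    intro r hr
    rw [TNet_root_eq hn hr]
    have := outDeg_T_r0 (n := n) (k := 0) (by omega)
    simpa using this
  types := by
    intro v hv
    rw [TNet_verts hn] at hv
    have h4 : v % 4 = 0 ∨ v % 4 = 1 ∨ v % 4 = 2 ∨ v % 4 = 3 := by omega
    rcases h4 with h | h | h | h
    · rcases Nat.eq_zero_or_pos v with rfl | hpos
      · exact Or.inl ⟨(TNet_verts hn).2 (by omega), inDeg_T0 n⟩
      · rcases Nat.lt_or_ge v (4*n) with hlt | hge
        · refine Or.inr (Or.inr (Or.inl ⟨(TNet_verts hn).2 hv, ?_, ?_⟩))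
          · rw [show v = 4*(v/4) by omega]; exact inDeg_T_r0 (by omega) (by omega)
          · rw [show v = 4*(v/4) by omega]; exact outDeg_T_r0 (by omega)
        · have hveq : v = 4*n := by omega
          subst hveq
          refine Or.inr (Or.inl ⟨(TNet_verts hn).2 hv, ?_, outDeg_T_top n⟩)
          exact inDeg_T_r0 (by omega) (le_refl n)
    · refine Or.inr (Or.inr (Or.inl ⟨(TNet_verts hn).2 hv, ?_, ?_⟩))
      · rw [show v = 4*(v/4)+1 by omega]; exact inDeg_T_r1 (by omega)
      · rw [show v = 4*(v/4)+1 by omega]; exact outDeg_T_r1 (by omega)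
    · refine Or.inr (Or.inr (Or.inr ⟨(TNet_verts hn).2 hv, ?_, ?_⟩))
      · rw [show v = 4*(v/4)+2 by omega]; exact inDeg_T_r2 (by omega)
      · rw [show v = 4*(v/4)+2 by omega]; exact outDeg_T_r2 (by omega)
    · refine Or.inr (Or.inl ⟨(TNet_verts hn).2 hv, ?_, ?_⟩)
      · rw [show v = 4*(v/4)+3 by omega]; exact inDeg_T_r3 (by omega)
      · rw [show v = 4*(v/4)+3 by omega]; exact outDeg_T_r3 n _
lemma TNet_in_iff {n v a₀ : ℕ}
    (hf : ((Finset.range (5*n)).filter fun i => tgtd i = v) = {a₀}) :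
    ∀ a ∈ (TNet n).arcs, ((TNet n).tgt a = v ↔ a = a₀) := by
  intro a ha
  rw [TNet_arcs, Finset.mem_range] at ha
  rw [TNet_tgt ha]
  have := Finset.ext_iff.1 hf a
  simp only [Finset.mem_filter, Finset.mem_range, Finset.mem_singleton] at this
  constructor
  · intro h; exact this.1 ⟨ha, h⟩
  · intro h; exact (this.2 h).2

lemma TNet_in_iff2 {n v a₀ a₁ : ℕ}
    (hf : ((Finset.range (5*n)).filter fun i => tgtd i = v) = {a₀, a₁}) :
    ∀ a ∈ (TNet n).arcs, ((TNet n).tgt a = v ↔ (a = a₀ ∨ a = a₁)) := by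
  intro a ha
  rw [TNet_arcs, Finset.mem_range] at ha
  rw [TNet_tgt ha]
  have := Finset.ext_iff.1 hf a
  simp only [Finset.mem_filter, Finset.mem_range, Finset.mem_insert,
    Finset.mem_singleton] at this
  constructor
  · intro h; exact this.1 ⟨ha, h⟩
  · intro h; exact (this.2 h).2

lemma T_count {n : ℕ} (hn : 1 ≤ n) : ∀ v, v ≤ 4*n →
    {l : List ℕ | IsWalk (TNet n) l 0 v}.Finite ∧
    Set.ncard {l : List ℕ | IsWalk (TNet n) l 0 v} =
      2^(v/4) * (if v % 4 = 2 then 2 else 1) := by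
  intro v
  induction v using Nat.strong_induction_on with
  | _ v ih =>
  intro hv
  have hsrc := TNet_src_mem (n := n) hn
  have htgt := TNet_tgt_mem (n := n) hn
  have harc : ∀ a, a < 5*n → a ∈ (TNet n).arcs := by
    intro a ha; rw [TNet_arcs, Finset.mem_range]; exact ha
  rcases Nat.eq_zero_or_pos v with rfl | hpos
  · rw [walks_self TNet_lt ((TNet_verts hn).2 (by omega))]
    simp
  have h4 : v % 4 = 0 ∨ v % 4 = 1 ∨ v % 4 = 2 ∨ v % 4 = 3 := by omega
  set k := v / 4 with hkdef
  rcases h4 with h | h | h | h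
  · -- v = 4*k, k ≥ 1
    have hveq : v = 4*k := by omega
    have hk1 : 1 ≤ k := by omega
    have hkn : k ≤ n := by omega
    have ha₀ : 5*k-1 ∈ (TNet n).arcs := harc _ (by omega)
    have hiff := TNet_in_iff (v := 4*k) (filt_tgt_r0 (n := n) hk1 hkn)
    have hsv : (TNet n).src (5*k-1) = 4*(k-1)+2 := by
      rw [TNet_src (by omega), show 5*k-1 = 5*(k-1)+4 by omega, srcd_v4]
    rw [hveq, walks_single hsrc htgt hiff ha₀ (by omega), hsv]
    obtain ⟨hfin, hcard⟩ := ih (4*(k-1)+2) (by omega) (by omega)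
    refine ⟨hfin.image _, ?_⟩
    rw [Set.ncard_image_of_injective _ (snoc_injective _), hcard]
    have e1 : (4*(k-1)+2)/4 = k-1 := by omega
    have e2 : (4*(k-1)+2) % 4 = 2 := by omega
    rw [e1, e2, if_pos rfl, if_neg (show ¬(4*k) % 4 = 2 by omega), mul_one,
      ← pow_succ, show k-1+1 = k by omega]
  · -- v = 4*k+1
    have hveq : v = 4*k+1 := by omega
    have hkn : k < n := by omega
    have ha₀ : 5*k ∈ (TNet n).arcs := harc _ (by omega)
    have hiff := TNet_in_iff (v := 4*k+1) (filt_tgt_r1 (n := n) hkn)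
    have hsv : (TNet n).src (5*k) = 4*k := by rw [TNet_src (by omega), srcd_v0]
    rw [hveq, walks_single hsrc htgt hiff ha₀ (by omega), hsv]
    obtain ⟨hfin, hcard⟩ := ih (4*k) (by omega) (by omega)
    refine ⟨hfin.image _, ?_⟩
    rw [Set.ncard_image_of_injective _ (snoc_injective _), hcard]
    rw [show 4*k/4 = k by omega, if_neg (show ¬(4*k) % 4 = 2 by omega),
      if_neg (show ¬(4*k+1) % 4 = 2 by omega)]
  · -- v = 4*k+2
    have hveq : v = 4*k+2 := by omega
    have hkn : k < n := by omega
    have ha₀ : 5*k+1 ∈ (TNet n).arcs := harc _ (by omega)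
    have ha₁ : 5*k+2 ∈ (TNet n).arcs := harc _ (by omega)
    have hiff := TNet_in_iff2 (v := 4*k+2) (filt_tgt_r2 (n := n) hkn)
    have hsv0 : (TNet n).src (5*k+1) = 4*k := by rw [TNet_src (by omega), srcd_v1]
    have hsv1 : (TNet n).src (5*k+2) = 4*k+1 := by rw [TNet_src (by omega), srcd_v2]
    rw [hveq, walks_double hsrc htgt hiff ha₀ ha₁ (by omega), hsv0, hsv1]
    obtain ⟨hfin0, hcard0⟩ := ih (4*k) (by omega) (by omega)
    obtain ⟨hfin1, hcard1⟩ := ih (4*k+1) (by omega) (by omega)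
    refine ⟨(hfin0.image _).union (hfin1.image _), ?_⟩
    rw [Set.ncard_union_eq (snoc_images_disjoint (by omega) _ _) (hfin0.image _)
      (hfin1.image _), Set.ncard_image_of_injective _ (snoc_injective _),
      Set.ncard_image_of_injective _ (snoc_injective _), hcard0, hcard1]
    rw [show 4*k/4 = k by omega, show (4*k+1)/4 = k by omega,
      if_neg (show ¬(4*k) % 4 = 2 by omega), if_neg (show ¬(4*k+1) % 4 = 2 by omega),
      if_pos (show (4*k+2) % 4 = 2 by omega)]
    ring
  · -- v = 4*k+3
    have hveq : v = 4*k+3 := by omega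
    have hkn : k < n := by omega
    have ha₀ : 5*k+3 ∈ (TNet n).arcs := harc _ (by omega)
    have hiff := TNet_in_iff (v := 4*k+3) (filt_tgt_r3 (n := n) hkn)
    have hsv : (TNet n).src (5*k+3) = 4*k+1 := by rw [TNet_src (by omega), srcd_v3]
    rw [hveq, walks_single hsrc htgt hiff ha₀ (by omega), hsv]
    obtain ⟨hfin, hcard⟩ := ih (4*k+1) (by omega) (by omega)
    refine ⟨hfin.image _, ?_⟩
    rw [Set.ncard_image_of_injective _ (snoc_injective _), hcard]
    rw [show (4*k+1)/4 = k by omega, if_neg (show ¬(4*k+1) % 4 = 2 by omega),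
      if_neg (show ¬(4*k+3) % 4 = 2 by omega)]
/-- The profile `(2^n, …, 2^0)`. -/
def pl (n : ℕ) : List ℕ := (List.range (n + 1)).reverse.map (2 ^ ·)

lemma pl_length (n : ℕ) : (pl n).length = n + 1 := by simp [pl]

lemma pl_getD {n i : ℕ} (hi : i ≤ n) : (pl n).getD i 0 = 2 ^ (n - i) := by
  rw [List.getD_eq_getElem _ _ (by rw [pl_length]; omega)]
  simp only [pl, List.getElem_map, List.getElem_reverse, List.length_range,
    List.getElem_range]
  congr 1
  all_goals omega

lemma not_retic_of_out {G : Net} {v : ℕ} (h : outDeg G v ≠ 1) : ¬ IsReticN G v :=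
  fun hr => h hr.2.2

lemma not_retic_of_in {G : Net} {v : ℕ} (h : inDeg G v ≠ 2) : ¬ IsReticN G v :=
  fun hr => h hr.2.1

def TR (n : ℕ) : LNet := ⟨TNet n, fun i => if i = 0 then 4*n else 4*(n-i)+3⟩

lemma TR_leaf_isLeaf {n : ℕ} (hn : 1 ≤ n) {i : ℕ} (hi : i < n + 1) :
    IsLeafN (TNet n) (if i = 0 then 4*n else 4*(n-i)+3) := by
  rcases eq_or_ne i 0 with rfl | h0
  · rw [if_pos rfl]
    exact ⟨(TNet_verts hn).2 (le_refl _), inDeg_T_r0 hn (le_refl n), outDeg_T_top n⟩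
  · rw [if_neg h0]
    refine ⟨(TNet_verts hn).2 (by omega), inDeg_T_r3 (by omega), outDeg_T_r3 n _⟩

lemma TNet_treeChild {n : ℕ} (hn : 1 ≤ n) : IsTreeChild (TNet n) := by
  intro v hv
  rw [TNet_verts hn] at hv
  have harc : ∀ a, a < 5*n → a ∈ (TNet n).arcs := by
    intro a ha; rw [TNet_arcs, Finset.mem_range]; exact ha
  have hmem : ∀ w, w ≤ 4*n → w ∈ (TNet n).verts := fun w hw => (TNet_verts hn).2 hw
  have hleaf3 : ∀ k, k < n → IsLeafN (TNet n) (4*k+3) := by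
    intro k hk
    exact ⟨hmem _ (by omega), inDeg_T_r3 hk, outDeg_T_r3 n k⟩
  have hleaftop : IsLeafN (TNet n) (4*n) :=
    ⟨hmem _ (le_refl _), inDeg_T_r0 hn (le_refl n), outDeg_T_top n⟩
  -- not-retic facts
  have hnr1 : ∀ k, k < n → ¬ IsReticN (TNet n) (4*k+1) :=
    fun k hk => not_retic_of_out (by rw [outDeg_T_r1 hk]; omega)
  have hnr3 : ∀ k, ¬ IsReticN (TNet n) (4*k+3) :=
    fun k => not_retic_of_out (by rw [outDeg_T_r3]; omega)
  have hnr0 : ∀ k, k ≤ n → ¬ IsReticN (TNet n) (4*k) := by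
    intro k hk
    rcases Nat.eq_zero_or_pos k with rfl | hkpos
    · exact not_retic_of_in (by rw [show (4:ℕ)*0 = 0 by omega, inDeg_T0]; omega)
    · exact not_retic_of_in (by rw [inDeg_T_r0 hkpos hk]; omega)
  -- walk from 4*k (k < n) to the leaf 4*k+3
  have hwalk0 : ∀ k, k < n → IsWalk (TNet n) [5*k, 5*k+3] (4*k) (4*k+3) := by
    intro k hk
    refine ⟨harc _ (by omega), by rw [TNet_src (by omega), srcd_v0], ?_⟩
    rw [TNet_tgt (by omega), tgtd_v0]
    refine ⟨harc _ (by omega), by rw [TNet_src (by omega), srcd_v3], ?_⟩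
    rw [TNet_tgt (by omega), tgtd_v3]
    exact ⟨rfl, hmem _ (by omega)⟩
  have hgood0 : ∀ k, k < n → ∀ a ∈ [5*k, 5*k+3],
      IsReticN (TNet n) ((TNet n).tgt a) → InBead (TNet n) ((TNet n).tgt a) := by
    intro k hk a ha hr
    exfalso
    simp only [List.mem_cons, List.mem_singleton, List.not_mem_nil, or_false] at ha
    rcases ha with rfl | rfl
    · rw [TNet_tgt (by omega), tgtd_v0] at hr; exact hnr1 k hk hr
    · rw [TNet_tgt (by omega), tgtd_v3] at hr; exact hnr3 k hr
  have h4 : v % 4 = 0 ∨ v % 4 = 1 ∨ v % 4 = 2 ∨ v % 4 = 3 := by omega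
  set k := v / 4 with hkdef
  rcases h4 with h | h | h | h
  · -- v = 4*k
    rcases Nat.lt_or_ge v (4*n) with hlt | hge
    · have hveq : v = 4*k := by omega
      have hk : k < n := by omega
      exact ⟨[5*k, 5*k+3], 4*k+3, hveq ▸ hwalk0 k hk, hleaf3 k hk, hgood0 k hk⟩
    · have hveq : v = 4*n := by omega
      exact ⟨[], 4*n, by rw [hveq]; exact ⟨rfl, hmem _ (le_refl _)⟩, hleaftop,
        by intro a ha; simp at ha⟩
  · -- v = 4*k+1 : walk [5*k+3]
    have hveq : v = 4*k+1 := by omega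
    have hk : k < n := by omega
    refine ⟨[5*k+3], 4*k+3, ?_, hleaf3 k hk, ?_⟩
    · rw [hveq]
      refine ⟨harc _ (by omega), by rw [TNet_src (by omega), srcd_v3], ?_⟩
      rw [TNet_tgt (by omega), tgtd_v3]
      exact ⟨rfl, hmem _ (by omega)⟩
    · intro a ha hr
      exfalso
      simp only [List.mem_singleton] at ha
      subst ha
      rw [TNet_tgt (by omega), tgtd_v3] at hr
      exact hnr3 k hr
  · -- v = 4*k+2 : walk [5*k+4] to 4*(k+1), then onwards
    have hveq : v = 4*k+2 := by omega
    have hk : k < n := by omega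
    have hstep : IsWalk (TNet n) [5*k+4] (4*k+2) (4*(k+1)) := by
      refine ⟨harc _ (by omega), by rw [TNet_src (by omega), srcd_v4], ?_⟩
      rw [TNet_tgt (by omega), tgtd_v4]
      exact ⟨by ring, hmem _ (by omega)⟩
    have hnr4 : ¬ IsReticN (TNet n) ((TNet n).tgt (5*k+4)) := by
      rw [TNet_tgt (by omega), tgtd_v4, show 4*k+4 = 4*(k+1) by ring]
      exact hnr0 (k+1) (by omega)
    rcases Nat.lt_or_ge (k+1) n with hlt | hge
    · -- continue to leaf 4*(k+1)+3
      refine ⟨[5*k+4, 5*(k+1), 5*(k+1)+3], 4*(k+1)+3, ?_, hleaf3 (k+1) hlt, ?_⟩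
      · rw [hveq]
        refine ⟨harc _ (by omega), by rw [TNet_src (by omega), srcd_v4], ?_⟩
        rw [TNet_tgt (by omega), tgtd_v4, show 4*k+4 = 4*(k+1) by ring]
        exact (hwalk0 (k+1) hlt)
      · intro a ha hr
        simp only [List.mem_cons, List.mem_singleton, List.not_mem_nil, or_false] at ha
        rcases ha with rfl | rfl | rfl
        · exact absurd hr hnr4
        · exfalso; rw [TNet_tgt (by omega), tgtd_v0] at hr; exact hnr1 (k+1) hlt hr
        · exfalso; rw [TNet_tgt (by omega), tgtd_v3] at hr; exact hnr3 (k+1) hr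
    · -- k+1 = n : 4*(k+1) is the top leaf
      have hkn : k+1 = n := by omega
      refine ⟨[5*k+4], 4*n, ?_, hleaftop, ?_⟩
      · rw [hveq, show 4*n = 4*(k+1) by omega]
        exact hstep
      · intro a ha hr
        simp only [List.mem_singleton] at ha
        subst ha
        exact absurd hr hnr4
  · -- v = 4*k+3 : leaf
    have hveq : v = 4*k+3 := by omega
    have hk : k < n := by omega
    exact ⟨[], 4*k+3, by rw [hveq]; exact ⟨rfl, hmem _ (by omega)⟩, hleaf3 k hk,
      by intro a ha; simp at ha⟩

lemma TR_realizes {n : ℕ} (hn : 1 ≤ n) : RealizesL (TR n) (pl n) := by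
  refine ⟨TNet_phylo hn, ?_, ?_, ?_, ?_⟩
  · intro i hi
    rw [pl_length] at hi
    exact TR_leaf_isLeaf hn hi
  · intro i j hi hj hij
    rw [pl_length] at hi hj
    simp only [TR] at hij
    split_ifs at hij <;> omega
  · intro v hv
    have hv' : IsLeafN (TNet n) v := hv
    obtain ⟨hvm, hin, hout⟩ := hv'
    have hmemv : v ≤ 4*n := (TNet_verts hn).1 hvm
    have h4 : v % 4 = 0 ∨ v % 4 = 1 ∨ v % 4 = 2 ∨ v % 4 = 3 := by omega
    set k := v / 4 with hkdef
    rcases h4 with h | h | h | h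
    · rcases Nat.lt_or_ge v (4*n) with hlt | hge
      · exfalso
        rcases Nat.eq_zero_or_pos v with rfl | hpos
        · rw [show (0:ℕ) = 4*0 by omega, outDeg_T_r0 (by omega)] at hout; omega
        · rw [show v = 4*k by omega, outDeg_T_r0 (by omega)] at hout; omega
      · refine ⟨0, by rw [pl_length]; omega, ?_⟩
        simp only [TR, if_true]
        omega
    · exfalso; rw [show v = 4*k+1 by omega, outDeg_T_r1 (by omega)] at hout; omega
    · exfalso; rw [show v = 4*k+2 by omega, outDeg_T_r2 (by omega)] at hout; omega
    · have hk : k < n := by omega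
      refine ⟨n - k, by rw [pl_length]; omega, ?_⟩
      simp only [TR]
      rw [if_neg (show n - k ≠ 0 by omega)]
      omega
  · intro i hi r hr
    rw [pl_length] at hi
    have hr0 := TNet_root_eq hn hr
    subst hr0
    rw [pl_getD (by omega : i ≤ n)]
    simp only [TR]
    rcases eq_or_ne i 0 with rfl | h0
    · rw [if_pos rfl]
      have := (T_count hn (4*n) (le_refl _)).2
      unfold nPaths
      rw [this, show 4*n/4 = n by omega, if_neg (by omega)]
      simp
    · rw [if_neg h0]
      have := (T_count hn (4*(n-i)+3) (by omega)).2
      unfold nPaths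
      rw [this, show (4*(n-i)+3)/4 = n-i by omega, if_neg (by omega)]
      simp
/-! ### The simplification sequence of `(2^n, …, 2^0)` -/

lemma pl_zero : pl 0 = [1] := rfl

lemma pl_succ (n : ℕ) : pl (n+1) = 2^(n+1) :: pl n := by
  simp [pl, List.range_succ]

lemma pl_one : pl 1 = [2, 1] := by rw [pl_succ, pl_zero]; rfl

lemma pl_ne_nil (n : ℕ) : pl n ≠ [] := by
  cases n with
  | zero => simp [pl_zero]
  | succ n => simp [pl_succ]

lemma pl_headI (n : ℕ) : (pl n).headI = 2^n := by
  cases n with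
  | zero => rfl
  | succ n => rw [pl_succ]; rfl

lemma headI_mem_pl (n : ℕ) : 2^n ∈ pl n := by
  cases n with
  | zero => simp [pl_zero]
  | succ n => rw [pl_succ]; exact List.mem_cons_self

lemma not_simple_cons_pl {a n : ℕ} (hn : 1 ≤ n) : ¬ IsSimpleP (a :: pl n) := by
  rintro ⟨-, -, h⟩
  have h2 := h (2^n) (by simpa using headI_mem_pl n)
  have : 1 < 2^n := Nat.one_lt_two_pow (by omega)
  omega

lemma not_simple_pl {n : ℕ} (hn : 2 ≤ n) : ¬ IsSimpleP (pl n) := by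
  obtain ⟨m, rfl⟩ : ∃ m, n = m + 2 := ⟨n - 2, by omega⟩
  rw [pl_succ]
  exact not_simple_cons_pl (by omega)

lemma simple_pl_one : IsSimpleP (pl 1) := by
  rw [pl_one]
  refine ⟨by simp, by simp, by simp⟩

lemma simpStep_simple {l : List ℕ} (h : IsSimpleP l) : simpStep l = l := by
  unfold simpStep
  rw [if_pos ⟨h.2.1, h.2.2⟩]

lemma simpStep_eq_case {m1 m2 : ℕ} {rest : List ℕ}
    (hns : ¬ (2 ≤ (m1 :: m2 :: rest).headI ∧ ∀ x ∈ (m1 :: m2 :: rest).tail, x = 1))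
    (heq : m1 = m2) : simpStep (m1 :: m2 :: rest) = m2 :: rest := by
  unfold simpStep
  rw [if_neg hns]
  simp [heq]

lemma simpStep_ins_case {m1 m2 : ℕ} {rest : List ℕ}
    (hns : ¬ (2 ≤ (m1 :: m2 :: rest).headI ∧ ∀ x ∈ (m1 :: m2 :: rest).tail, x = 1))
    (hne : m1 ≠ m2) (hle : ¬ m2 < m1 - m2) :
    simpStep (m1 :: m2 :: rest) = insertDesc (m1 - m2) (m2 :: rest) := by
  unfold simpStep
  rw [if_neg hns]
  simp [hne, hle]

lemma insertDesc_cons_le {x y : ℕ} (ys : List ℕ) (h : x ≤ y) :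
    insertDesc x (y :: ys) = y :: insertDesc x ys := by
  unfold insertDesc; rw [if_pos h]; cases ys <;> rfl

lemma insertDesc_cons_gt {x y : ℕ} (ys : List ℕ) (h : ¬ x ≤ y) :
    insertDesc x (y :: ys) = x :: y :: ys := by
  unfold insertDesc; rw [if_neg h]

lemma two_pow_lt (m : ℕ) : (2:ℕ)^m < 2^(m+1) := by
  have h1 : (2:ℕ)^(m+1) = 2 * 2^m := by ring
  have h2 : (1:ℕ) ≤ 2^m := Nat.one_le_two_pow
  omega

lemma insertDesc_pl (m : ℕ) : insertDesc (2^(m+1)) (pl m) = 2^(m+1) :: pl m := by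
  cases m with
  | zero =>
    rw [pl_zero]
    exact insertDesc_cons_gt _ (by norm_num)
  | succ m =>
    rw [pl_succ]
    refine insertDesc_cons_gt _ ?_
    have := two_pow_lt (m+1)
    omega

lemma ns_cond {a n : ℕ} (hn : 1 ≤ n) :
    ¬ (2 ≤ (a :: (pl n : List ℕ)).headI ∧ ∀ x ∈ (a :: pl n).tail, x = 1) := by
  rintro ⟨-, h⟩
  have h2 := h (2^n) (by simpa using headI_mem_pl n)
  have : 1 < 2^n := Nat.one_lt_two_pow (by omega)
  omega

lemma simpStep_pl (n : ℕ) : simpStep (pl (n+2)) = 2^(n+1) :: pl (n+1) := by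
  have hlt := two_pow_lt (n+1)
  have hpow : 2^(n+2) - 2^(n+1) = 2^(n+1) := by
    have : (2:ℕ)^(n+2) = 2 * 2^(n+1) := by ring
    omega
  have hcond := ns_cond (a := 2^(n+2)) (n := n+1) (by omega)
  calc simpStep (pl (n+2)) = simpStep (2^(n+2) :: 2^(n+1) :: pl n) := by
        rw [pl_succ, pl_succ]
    _ = insertDesc (2^(n+2) - 2^(n+1)) (2^(n+1) :: pl n) := by
        refine simpStep_ins_case ?_ (by omega) (by omega)
        rw [show (2^(n+1) :: pl n : List ℕ) = pl (n+1) by rw [pl_succ]]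
        exact hcond
    _ = insertDesc (2^(n+1)) (2^(n+1) :: pl n) := by rw [hpow]
    _ = 2^(n+1) :: insertDesc (2^(n+1)) (pl n) := insertDesc_cons_le _ (le_refl _)
    _ = 2^(n+1) :: 2^(n+1) :: pl n := by rw [insertDesc_pl n]
    _ = 2^(n+1) :: pl (n+1) := by rw [← pl_succ]

lemma simpStep_mid (n : ℕ) : simpStep (2^(n+1) :: pl (n+1)) = pl (n+1) := by
  have hcond := ns_cond (a := 2^(n+1)) (n := n+1) (by omega)
  calc simpStep (2^(n+1) :: pl (n+1)) = simpStep (2^(n+1) :: 2^(n+1) :: pl n) := by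
        rw [pl_succ]
    _ = 2^(n+1) :: pl n := by
        refine simpStep_eq_case ?_ rfl
        rw [show (2^(n+1) :: pl n : List ℕ) = pl (n+1) by rw [pl_succ]]
        exact hcond
    _ = pl (n+1) := by rw [← pl_succ]

lemma traj (k : ℕ) :
    (∀ n : ℕ, IsSimpleP (simpStep^[k] (pl (n+1))) → simpStep^[k] (pl (n+1)) = pl 1) ∧
    (∀ n : ℕ, IsSimpleP (simpStep^[k] (2^(n+1) :: pl (n+1))) →
      simpStep^[k] (2^(n+1) :: pl (n+1)) = pl 1) := by
  induction k with
  | zero =>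
    constructor
    · intro n h
      simp only [Function.iterate_zero, id] at h ⊢
      cases n with
      | zero => rfl
      | succ n => exact absurd h (not_simple_pl (by omega))
    · intro n h
      simp only [Function.iterate_zero, id] at h ⊢
      exact absurd h (not_simple_cons_pl (by omega))
  | succ k ih =>
    constructor
    · intro n h
      rw [Function.iterate_succ_apply] at h ⊢
      cases n with
      | zero =>
        rw [simpStep_simple simple_pl_one] at h ⊢
        exact ih.1 0 h
      | succ n =>
        rw [simpStep_pl n] at h ⊢
        exact ih.2 n h
    · intro n h
      rw [Function.iterate_succ_apply, simpStep_mid n] at h ⊢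
      exact ih.1 n h

lemma terminal_eq {n : ℕ} (hn : 1 ≤ n) {mt : List ℕ} (ht : IsTerminal (pl n) mt) :
    mt = pl 1 := by
  obtain ⟨hsimp, k, hk⟩ := ht
  obtain ⟨m, rfl⟩ : ∃ m, n = m + 1 := ⟨n - 1, by omega⟩
  rw [← hk]
  exact (traj k).1 m (hk ▸ hsimp)
/-! ### The core network `B((2,1))` -/

instance walkDec (G : Net) : ∀ (l : List ℕ) (u v : ℕ), Decidable (IsWalk G l u v)
  | [], u, v => decidable_of_iff (u = v ∧ u ∈ G.verts) Iff.rfl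
  | a :: l, u, v =>
    have : Decidable (IsWalk G l (G.tgt a) v) := walkDec G l _ v
    decidable_of_iff (a ∈ G.arcs ∧ G.src a = u ∧ IsWalk G l (G.tgt a) v) Iff.rfl

instance (G : Net) (v : ℕ) : Decidable (IsReticN G v) :=
  decidable_of_iff (v ∈ G.verts ∧ inDeg G v = 2 ∧ outDeg G v = 1) Iff.rfl

/-- Closure of a network. -/
def ClosedN (G : Net) : Prop := ∀ a ∈ G.arcs, G.src a ∈ G.verts ∧ G.tgt a ∈ G.verts

instance (G : Net) : Decidable (ClosedN G) :=
  decidable_of_iff (∀ a ∈ G.arcs, G.src a ∈ G.verts ∧ G.tgt a ∈ G.verts) Iff.rfl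

/-- The invariant maintained along the traceback. -/
def PInv (R : LNet) : Prop :=
  ClosedN R.net ∧ IsTreeChild R.net ∧ IsLeafN R.net (R.leaf 0)

lemma core_arcs : (BLNet (pl 1)).net.arcs = {0, 1, 2, 3, 4} := by
  rw [pl_one]; decide

lemma core_verts : (BLNet (pl 1)).net.verts = {2, 8, 3, 0, 16} := by
  rw [pl_one]; decide

lemma core_PInv : PInv (BLNet (pl 1)) := by
  rw [pl_one]
  refine ⟨by decide, ?_, by decide⟩
  intro v hv
  have hv' : v = 2 ∨ v = 8 ∨ v = 3 ∨ v = 0 ∨ v = 16 := by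
    have h : (BLNet [2,1]).net.verts = {2, 8, 3, 0, 16} := by decide
    rw [h] at hv
    simpa using hv
  rcases hv' with rfl | rfl | rfl | rfl | rfl
  · refine ⟨[1, 4], 16, by decide, by decide, ?_⟩
    intro a ha hr
    exfalso
    simp only [List.mem_cons, List.not_mem_nil, or_false] at ha
    rcases ha with rfl | rfl
    · exact absurd hr (by decide)
    · exact absurd hr (by decide)
  · refine ⟨[4], 16, by decide, by decide, ?_⟩
    intro a ha hr
    exfalso
    simp only [List.mem_cons, List.not_mem_nil, or_false] at ha
    rcases ha with rfl
    exact absurd hr (by decide)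
  · refine ⟨[3], 0, by decide, by decide, ?_⟩
    intro a ha hr
    exfalso
    simp only [List.mem_cons, List.not_mem_nil, or_false] at ha
    rcases ha with rfl
    exact absurd hr (by decide)
  · exact ⟨[], 0, by decide, by decide, by intro a ha; simp at ha⟩
  · exact ⟨[], 16, by decide, by decide, by intro a ha; simp at ha⟩
/-! ### The traceback step preserves the invariant -/

set_option maxHeartbeats 2000000 in
lemma step_PInv {R₀ R'' N : LNet} (h₀ : PInv R₀)
    (hexp : CherryExpandOp R₀ R'') (hins : InsertBackOp 1 R'' N) : PInv N := by
  obtain ⟨hcl₀, htc₀, hleaf₀⟩ := h₀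
  obtain ⟨y1, y2, b1, b2, hy1, hy2, hyne, hb1, hb2, hbne, hV, hA, hold,
    hsb1, htb1, hsb2, htb2, hl0, hl1, hlsh⟩ := hexp
  obtain ⟨u, Y1, Y2, c1, c2, c3, az, hu, hY1, hY2, huY1, huY2, hY12,
    hc1, hc2, hc3, hc12, hc13, hc23, haz, htaz, hNV, hNA, hNold,
    hsaz, htaz', hsc1, htc1, hsc2, htc2, hsc3, htc3, hNl0, hNl1, hNsh1, hNsh2⟩ := hins
  set z := R₀.leaf 0 with hzdef
  set V₀ := R₀.net.verts with hV₀
  set A₀ := R₀.net.arcs with hA₀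
  have hzV : z ∈ V₀ := hleaf₀.1
  -- memberships in R''
  have hmem'' : ∀ v, v ∈ R''.net.verts ↔ (v ∈ V₀ ∨ v = y1 ∨ v = y2) := by
    intro v
    rw [hV]
    simp only [Finset.mem_union, Finset.mem_insert, Finset.mem_singleton]
  have hamem'' : ∀ a, a ∈ R''.net.arcs ↔ (a ∈ A₀ ∨ a = b1 ∨ a = b2) := by
    intro a
    rw [hA]
    simp only [Finset.mem_union, Finset.mem_insert, Finset.mem_singleton]
  -- fresh vertex separations
  have hu' : u ∉ V₀ ∧ u ≠ y1 ∧ u ≠ y2 := by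
    have := hu; rw [hmem''] at this; push_neg at this; exact this
  have hY1' : Y1 ∉ V₀ ∧ Y1 ≠ y1 ∧ Y1 ≠ y2 := by
    have := hY1; rw [hmem''] at this; push_neg at this; exact this
  have hY2' : Y2 ∉ V₀ ∧ Y2 ≠ y1 ∧ Y2 ≠ y2 := by
    have := hY2; rw [hmem''] at this; push_neg at this; exact this
  have hc1' : c1 ∉ A₀ ∧ c1 ≠ b1 ∧ c1 ≠ b2 := by
    have := hc1; rw [hamem''] at this; push_neg at this; exact this
  have hc2' : c2 ∉ A₀ ∧ c2 ≠ b1 ∧ c2 ≠ b2 := by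
    have := hc2; rw [hamem''] at this; push_neg at this; exact this
  have hc3' : c3 ∉ A₀ ∧ c3 ≠ b1 ∧ c3 ≠ b2 := by
    have := hc3; rw [hamem''] at this; push_neg at this; exact this
  -- identify az = b2
  have haz2 : az = b2 := by
    rcases (hamem'' az).1 haz with h | h | h
    · exfalso
      have h1 := (hold az h).2
      have h2 : R₀.net.tgt az ∈ V₀ := (hcl₀ az h).2
      rw [htaz, hl1] at h1
      rw [← h1] at h2
      exact hy2 h2
    · exfalso
      rw [h, htb1, hl1] at htaz
      exact hyne htaz
    · exact h
  rw [haz2] at hsaz htaz' hNold haz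
  have hb2mem : b2 ∈ R''.net.arcs := haz
  have hb1mem : b1 ∈ R''.net.arcs := (hamem'' b1).2 (Or.inr (Or.inl rfl))
  -- membership in N
  have hNmem : ∀ v, v ∈ N.net.verts ↔
      (v ∈ V₀ ∨ v = y1 ∨ v = u ∨ v = Y1 ∨ v = Y2) := by
    intro v
    rw [hNV, hl1]
    simp only [Finset.mem_union, Finset.mem_erase, hmem'', Finset.mem_insert,
      Finset.mem_singleton]
    constructor
    · rintro (⟨hne, h | h | h⟩ | h | h | h)
      · exact Or.inl h
      · exact Or.inr (Or.inl h)
      · exact absurd h hne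
      · exact Or.inr (Or.inr (Or.inl h))
      · exact Or.inr (Or.inr (Or.inr (Or.inl h)))
      · exact Or.inr (Or.inr (Or.inr (Or.inr h)))
    · rintro (h | h | h | h | h)
      · exact Or.inl ⟨fun he => hy2 (he ▸ h), Or.inl h⟩
      · exact Or.inl ⟨fun he => hyne (h ▸ he), Or.inr (Or.inl h)⟩
      · exact Or.inr (Or.inl h)
      · exact Or.inr (Or.inr (Or.inl h))
      · exact Or.inr (Or.inr (Or.inr h))
  have hNamem : ∀ a, a ∈ N.net.arcs ↔
      (a ∈ A₀ ∨ a = b1 ∨ a = b2 ∨ a = c1 ∨ a = c2 ∨ a = c3) := by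
    intro a
    rw [hNA]
    simp only [Finset.mem_union, hamem'', Finset.mem_insert, Finset.mem_singleton]
    tauto
  -- membership helpers
  have mb1 : b1 ∈ N.net.arcs := (hNamem b1).2 (Or.inr (Or.inl rfl))
  have mb2 : b2 ∈ N.net.arcs := (hNamem b2).2 (Or.inr (Or.inr (Or.inl rfl)))
  have mc1 : c1 ∈ N.net.arcs := (hNamem c1).2 (Or.inr (Or.inr (Or.inr (Or.inl rfl))))
  have mc2 : c2 ∈ N.net.arcs := (hNamem c2).2 (Or.inr (Or.inr (Or.inr (Or.inr (Or.inl rfl)))))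
  have mc3 : c3 ∈ N.net.arcs := (hNamem c3).2 (Or.inr (Or.inr (Or.inr (Or.inr (Or.inr rfl)))))
  have my1 : y1 ∈ N.net.verts := (hNmem y1).2 (Or.inr (Or.inl rfl))
  have mu : u ∈ N.net.verts := (hNmem u).2 (Or.inr (Or.inr (Or.inl rfl)))
  have mY1 : Y1 ∈ N.net.verts := (hNmem Y1).2 (Or.inr (Or.inr (Or.inr (Or.inl rfl))))
  have mY2 : Y2 ∈ N.net.verts := (hNmem Y2).2 (Or.inr (Or.inr (Or.inr (Or.inr rfl))))
  -- endpoints in N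
  have hNpres : ∀ a ∈ A₀, N.net.src a = R₀.net.src a ∧ N.net.tgt a = R₀.net.tgt a := by
    intro a ha
    have ha'' : a ∈ R''.net.arcs := (hamem'' a).2 (Or.inl ha)
    have h1 := hNold a ha'' (fun he => hb2 (he ▸ ha))
    have h2 := hold a ha
    exact ⟨h1.1.trans h2.1, h1.2.trans h2.2⟩
  have hNb1 : N.net.src b1 = z ∧ N.net.tgt b1 = y1 := by
    have h1 := hNold b1 hb1mem hbne
    exact ⟨h1.1.trans hsb1, h1.2.trans htb1⟩
  have hNb2 : N.net.src b2 = z ∧ N.net.tgt b2 = u := ⟨hsaz.trans hsb2, htaz'⟩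
  have hNc1 : N.net.src c1 = y1 ∧ N.net.tgt c1 = u := ⟨hsc1.trans hl0, htc1⟩
  have hNc2 : N.net.src c2 = u ∧ N.net.tgt c2 = Y1 := ⟨hsc2, htc2⟩
  have hNc3 : N.net.src c3 = y1 ∧ N.net.tgt c3 = Y2 := ⟨hsc3.trans hl0, htc3⟩
  -- source and targets of old arcs are old
  have hsrcV : ∀ a ∈ A₀, R₀.net.src a ∈ V₀ := fun a ha => (hcl₀ a ha).1
  have htgtV : ∀ a ∈ A₀, R₀.net.tgt a ∈ V₀ := fun a ha => (hcl₀ a ha).2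
  -- z has no outgoing arcs in R₀
  have hzout : ∀ a ∈ A₀, R₀.net.src a ≠ z := by
    intro a ha he
    have h0 : outDeg R₀.net z = 0 := hleaf₀.2.2
    have : a ∈ A₀.filter fun a => R₀.net.src a = z := Finset.mem_filter.2 ⟨ha, he⟩
    rw [Finset.card_eq_zero.1 h0] at this
    simp at this
  -- degree computations in N
  have hinY1 : N.net.arcs.filter (fun a => N.net.tgt a = Y1) = {c2} := by
    ext a
    simp only [Finset.mem_filter, Finset.mem_singleton]
    constructor
    · rintro ⟨haN, ht⟩
      rcases (hNamem a).1 haN with h | rfl | rfl | rfl | rfl | rfl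
      · exfalso; rw [(hNpres a h).2] at ht; exact hY1'.1 (ht ▸ htgtV a h)
      · exfalso; rw [hNb1.2] at ht; exact hY1'.2.1 ht.symm
      · exfalso; rw [hNb2.2] at ht; exact huY1 ht
      · exfalso; rw [hNc1.2] at ht; exact huY1 ht
      · rfl
      · exfalso; rw [hNc3.2] at ht; exact hY12 ht.symm
    · rintro rfl
      exact ⟨mc2, hNc2.2⟩
  have houtY1 : N.net.arcs.filter (fun a => N.net.src a = Y1) = ∅ := by
    ext a
    simp only [Finset.mem_filter, Finset.notMem_empty, iff_false, not_and]
    intro haN ht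
    rcases (hNamem a).1 haN with h | rfl | rfl | rfl | rfl | rfl
    · rw [(hNpres a h).1] at ht; exact hY1'.1 (ht ▸ hsrcV a h)
    · rw [hNb1.1] at ht; exact hY1'.1 (ht ▸ hzV)
    · rw [hNb2.1] at ht; exact hY1'.1 (ht ▸ hzV)
    · rw [hNc1.1] at ht; exact hY1'.2.1 ht.symm
    · rw [hNc2.1] at ht; exact huY1 ht
    · rw [hNc3.1] at ht; exact hY1'.2.1 ht.symm
  have hinY2 : N.net.arcs.filter (fun a => N.net.tgt a = Y2) = {c3} := by
    ext a
    simp only [Finset.mem_filter, Finset.mem_singleton]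
    constructor
    · rintro ⟨haN, ht⟩
      rcases (hNamem a).1 haN with h | rfl | rfl | rfl | rfl | rfl
      · exfalso; rw [(hNpres a h).2] at ht; exact hY2'.1 (ht ▸ htgtV a h)
      · exfalso; rw [hNb1.2] at ht; exact hY2'.2.1 ht.symm
      · exfalso; rw [hNb2.2] at ht; exact huY2 ht
      · exfalso; rw [hNc1.2] at ht; exact huY2 ht
      · exfalso; rw [hNc2.2] at ht; exact hY12 ht
      · rfl
    · rintro rfl
      exact ⟨mc3, hNc3.2⟩
  have houtY2 : N.net.arcs.filter (fun a => N.net.src a = Y2) = ∅ := by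
    ext a
    simp only [Finset.mem_filter, Finset.notMem_empty, iff_false, not_and]
    intro haN ht
    rcases (hNamem a).1 haN with h | rfl | rfl | rfl | rfl | rfl
    · rw [(hNpres a h).1] at ht; exact hY2'.1 (ht ▸ hsrcV a h)
    · rw [hNb1.1] at ht; exact hY2'.1 (ht ▸ hzV)
    · rw [hNb2.1] at ht; exact hY2'.1 (ht ▸ hzV)
    · rw [hNc1.1] at ht; exact hY2'.2.1 ht.symm
    · rw [hNc2.1] at ht; exact huY2 ht
    · rw [hNc3.1] at ht; exact hY2'.2.1 ht.symm
  have houty1 : N.net.arcs.filter (fun a => N.net.src a = y1) = {c1, c3} := by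
    ext a
    simp only [Finset.mem_filter, Finset.mem_insert, Finset.mem_singleton]
    constructor
    · rintro ⟨haN, ht⟩
      rcases (hNamem a).1 haN with h | rfl | rfl | rfl | rfl | rfl
      · exfalso; rw [(hNpres a h).1] at ht; exact hy1 (ht ▸ hsrcV a h)
      · exfalso; rw [hNb1.1] at ht; exact hy1 (ht ▸ hzV)
      · exfalso; rw [hNb2.1] at ht; exact hy1 (ht ▸ hzV)
      · exact Or.inl rfl
      · exfalso; rw [hNc2.1] at ht; exact hu'.2.1 ht
      · exact Or.inr rfl
    · rintro (rfl | rfl)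
      · exact ⟨mc1, hNc1.1⟩
      · exact ⟨mc3, hNc3.1⟩
  have houtz : N.net.arcs.filter (fun a => N.net.src a = z) = {b1, b2} := by
    ext a
    simp only [Finset.mem_filter, Finset.mem_insert, Finset.mem_singleton]
    constructor
    · rintro ⟨haN, ht⟩
      rcases (hNamem a).1 haN with h | rfl | rfl | rfl | rfl | rfl
      · exfalso; rw [(hNpres a h).1] at ht; exact hzout a h ht
      · exact Or.inl rfl
      · exact Or.inr rfl
      · exfalso; rw [hNc1.1] at ht; exact hy1 (ht ▸ hzV)
      · exfalso; rw [hNc2.1] at ht; exact hu'.1 (ht ▸ hzV)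
      · exfalso; rw [hNc3.1] at ht; exact hy1 (ht ▸ hzV)
    · rintro (rfl | rfl)
      · exact ⟨mb1, hNb1.1⟩
      · exact ⟨mb2, hNb2.1⟩
  -- degrees of old vertices other than z are unchanged
  have hfin_eq : ∀ v ∈ V₀, N.net.arcs.filter (fun a => N.net.tgt a = v) =
      A₀.filter (fun a => R₀.net.tgt a = v) := by
    intro v hvV
    ext a
    simp only [Finset.mem_filter]
    constructor
    · rintro ⟨haN, ht⟩
      rcases (hNamem a).1 haN with h | rfl | rfl | rfl | rfl | rfl
      · refine ⟨h, ?_⟩; rw [← (hNpres a h).2]; exact ht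
      · exfalso; rw [hNb1.2] at ht; exact hy1 (ht ▸ hvV)
      · exfalso; rw [hNb2.2] at ht; exact hu'.1 (ht ▸ hvV)
      · exfalso; rw [hNc1.2] at ht; exact hu'.1 (ht ▸ hvV)
      · exfalso; rw [hNc2.2] at ht; exact hY1'.1 (ht ▸ hvV)
      · exfalso; rw [hNc3.2] at ht; exact hY2'.1 (ht ▸ hvV)
    · rintro ⟨ha, ht⟩
      exact ⟨(hNamem a).2 (Or.inl ha), by rw [(hNpres a ha).2]; exact ht⟩
  have hfout_eq : ∀ v ∈ V₀, v ≠ z → N.net.arcs.filter (fun a => N.net.src a = v) =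
      A₀.filter (fun a => R₀.net.src a = v) := by
    intro v hvV hvz
    ext a
    simp only [Finset.mem_filter]
    constructor
    · rintro ⟨haN, ht⟩
      rcases (hNamem a).1 haN with h | rfl | rfl | rfl | rfl | rfl
      · refine ⟨h, ?_⟩; rw [← (hNpres a h).1]; exact ht
      · exfalso; rw [hNb1.1] at ht; exact hvz ht.symm
      · exfalso; rw [hNb2.1] at ht; exact hvz ht.symm
      · exfalso; rw [hNc1.1] at ht; exact hy1 (ht ▸ hvV)
      · exfalso; rw [hNc2.1] at ht; exact hu'.1 (ht ▸ hvV)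
      · exfalso; rw [hNc3.1] at ht; exact hy1 (ht ▸ hvV)
    · rintro ⟨ha, ht⟩
      exact ⟨(hNamem a).2 (Or.inl ha), by rw [(hNpres a ha).1]; exact ht⟩
  have hdegs : ∀ v ∈ V₀, v ≠ z →
      inDeg N.net v = inDeg R₀.net v ∧ outDeg N.net v = outDeg R₀.net v := by
    intro v hvV hvz
    constructor
    · unfold inDeg; rw [hfin_eq v hvV]
    · unfold outDeg; rw [hfout_eq v hvV hvz]
  -- leaf facts in N
  have hY1leaf : IsLeafN N.net Y1 := by
    refine ⟨mY1, ?_, ?_⟩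
    · unfold inDeg; rw [hinY1]; rfl
    · unfold outDeg; rw [houtY1]; rfl
  have hY2leaf : IsLeafN N.net Y2 := by
    refine ⟨mY2, ?_, ?_⟩
    · unfold inDeg; rw [hinY2]; rfl
    · unfold outDeg; rw [houtY2]; rfl
  -- non-reticulation facts
  have hnotretY1 : ¬ IsReticN N.net Y1 := by
    intro hr
    have := hr.2.2
    unfold outDeg at this
    rw [houtY1] at this
    simp at this
  have hnotretY2 : ¬ IsReticN N.net Y2 := by
    intro hr
    have := hr.2.2
    unfold outDeg at this
    rw [houtY2] at this
    simp at this
  have hnotrety1 : ¬ IsReticN N.net y1 := by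
    intro hr
    have := hr.2.2
    unfold outDeg at this
    rw [houty1] at this
    rw [Finset.card_pair hc13] at this
    omega
  have hnotretz : ¬ IsReticN N.net z := by
    intro hr
    have := hr.2.2
    unfold outDeg at this
    rw [houtz] at this
    rw [Finset.card_pair hbne] at this
    omega
  -- reticulations and beads transfer
  have hret_transfer : ∀ v ∈ V₀, v ≠ z → IsReticN N.net v → IsReticN R₀.net v := by
    intro v hvV hvz hr
    obtain ⟨hd1, hd2⟩ := hdegs v hvV hvz
    exact ⟨hvV, hd1 ▸ hr.2.1, hd2 ▸ hr.2.2⟩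
  have hbead_transfer : ∀ v, InBead R₀.net v → InBead N.net v := by
    rintro v ⟨a, b, ha, hb, hab, hs, ht, hv⟩
    refine ⟨a, b, (hNamem a).2 (Or.inl ha), (hNamem b).2 (Or.inl hb), hab, ?_, ?_, ?_⟩
    · rw [(hNpres a ha).1, (hNpres b hb).1]; exact hs
    · rw [(hNpres a ha).2, (hNpres b hb).2]; exact ht
    · rw [(hNpres a ha).1, (hNpres a ha).2]; exact hv
  -- walks transfer from R₀ to N
  have hwalkN : ∀ (l : List ℕ) (v w : ℕ), IsWalk R₀.net l v w → IsWalk N.net l v w := by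
    intro l
    induction l with
    | nil =>
      intro v w h
      exact ⟨h.1, (hNmem v).2 (Or.inl h.2)⟩
    | cons a l ih =>
      intro v w h
      have ha : a ∈ A₀ := h.1
      refine ⟨(hNamem a).2 (Or.inl ha), (hNpres a ha).1.symm ▸ h.2.1, ?_⟩
      rw [(hNpres a ha).2]
      exact ih _ _ h.2.2
  -- the two extension walks
  have hwb : IsWalk N.net [b1, c3] z Y2 := by
    refine ⟨mb1, hNb1.1, ?_⟩
    rw [hNb1.2]
    refine ⟨mc3, hNc3.1, ?_⟩
    rw [hNc3.2]
    exact ⟨rfl, mY2⟩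
  -- good-walk condition helper for old walks
  have hgoodN : ∀ (l : List ℕ) (v w : ℕ), IsWalk R₀.net l v w →
      (∀ a ∈ l, IsReticN R₀.net (R₀.net.tgt a) → InBead R₀.net (R₀.net.tgt a)) →
      ∀ a ∈ l, IsReticN N.net (N.net.tgt a) → InBead N.net (N.net.tgt a) := by
    intro l v w hw hgood a ha hr
    have haA : a ∈ A₀ := isWalk_arcs_mem hw a ha
    rw [(hNpres a haA).2] at hr ⊢
    have hx : R₀.net.tgt a ∈ V₀ := htgtV a haA
    rcases eq_or_ne (R₀.net.tgt a) z with he | hne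
    · exact absurd (he ▸ hr) hnotretz
    · exact hbead_transfer _ (hgood a ha (hret_transfer _ hx hne hr))
  refine ⟨?_, ?_, ?_⟩
  · -- ClosedN
    intro a haN
    rcases (hNamem a).1 haN with h | rfl | rfl | rfl | rfl | rfl
    · exact ⟨(hNpres a h).1.symm ▸ (hNmem _).2 (Or.inl (hsrcV a h)),
        (hNpres a h).2.symm ▸ (hNmem _).2 (Or.inl (htgtV a h))⟩
    · exact ⟨hNb1.1.symm ▸ (hNmem z).2 (Or.inl hzV), hNb1.2.symm ▸ my1⟩
    · exact ⟨hNb2.1.symm ▸ (hNmem z).2 (Or.inl hzV), hNb2.2.symm ▸ mu⟩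
    · exact ⟨hNc1.1.symm ▸ my1, hNc1.2.symm ▸ mu⟩
    · exact ⟨hNc2.1.symm ▸ mu, hNc2.2.symm ▸ mY1⟩
    · exact ⟨hNc3.1.symm ▸ my1, hNc3.2.symm ▸ mY2⟩
  · -- IsTreeChild
    intro v hvN
    rcases (hNmem v).1 hvN with hvV | hv | hv | hv | hv
    · -- old vertex
      obtain ⟨l, w, hw, hwleaf, hgood⟩ := htc₀ v hvV
      rcases eq_or_ne w z with he | hwz
      · -- extend the walk to Y2
        have hwb' : IsWalk N.net [b1, c3] w Y2 := by rw [he]; exact hwb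
        refine ⟨l ++ [b1, c3], Y2, isWalk_append (hwalkN l v w hw) hwb', hY2leaf, ?_⟩
        intro a ha hr
        rcases List.mem_append.1 ha with ha' | ha'
        · exact hgoodN l v w hw hgood a ha' hr
        · simp only [List.mem_cons, List.not_mem_nil, or_false] at ha'
          rcases ha' with rfl | rfl
          · exact absurd hr (by rw [hNb1.2]; exact hnotrety1)
          · exact absurd hr (by rw [hNc3.2]; exact hnotretY2)
      · -- reuse the walk
        have hwV : w ∈ V₀ := hwleaf.1
        obtain ⟨hd1, hd2⟩ := hdegs w hwV hwz
        refine ⟨l, w, hwalkN l v w hw, ⟨(hNmem w).2 (Or.inl hwV),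
          hd1.trans hwleaf.2.1, hd2.trans hwleaf.2.2⟩, hgoodN l v w hw hgood⟩
    · -- v = y1
      rw [hv]
      refine ⟨[c3], Y2, ⟨mc3, hNc3.1, ?_⟩, hY2leaf, ?_⟩
      · rw [hNc3.2]; exact ⟨rfl, mY2⟩
      · intro a ha hr
        simp only [List.mem_cons, List.not_mem_nil, or_false] at ha
        rcases ha with rfl
        exact absurd hr (by rw [hNc3.2]; exact hnotretY2)
    · -- v = u
      rw [hv]
      refine ⟨[c2], Y1, ⟨mc2, hNc2.1, ?_⟩, hY1leaf, ?_⟩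
      · rw [hNc2.2]; exact ⟨rfl, mY1⟩
      · intro a ha hr
        simp only [List.mem_cons, List.not_mem_nil, or_false] at ha
        rcases ha with rfl
        exact absurd hr (by rw [hNc2.2]; exact hnotretY1)
    · rw [hv]
      exact ⟨[], Y1, ⟨rfl, mY1⟩, hY1leaf, by intro a ha; simp at ha⟩
    · rw [hv]
      exact ⟨[], Y2, ⟨rfl, mY2⟩, hY2leaf, by intro a ha; simp at ha⟩
  · -- leaf 0 of N is a leaf
    rw [hNl0]
    exact hY1leaf
/-! ### Traceback networks are tree-child -/

lemma take_one (m : ℕ) :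
    ((pl (m+2)).tail.takeWhile fun y =>
      decide ((pl (m+2)).headI - (pl (m+2)).tail.headI ≤ y)).length = 1 := by
  have hd : (pl (m+2)).headI - (pl (m+2)).tail.headI = 2^(m+1) := by
    rw [pl_succ, List.headI_cons, List.tail_cons, pl_headI]
    have h : (2:ℕ)^(m+2) = 2*2^(m+1) := by ring
    omega
  rw [hd, show (pl (m+2)).tail = 2^(m+1) :: pl m by rw [pl_succ, List.tail_cons, pl_succ]]
  rw [List.takeWhile_cons, if_pos (by simp)]
  have hrest : (pl m).takeWhile (fun y => decide (2^(m+1) ≤ y)) = [] := by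
    cases m with
    | zero =>
      rw [pl_zero, List.takeWhile_cons, if_neg (by simp)]
    | succ m' =>
      rw [pl_succ, List.takeWhile_cons, if_neg (by
        simp only [decide_eq_true_eq]
        have := two_pow_lt (m'+1)
        omega)]
  rw [hrest]
  rfl

lemma traceback_PInv : ∀ n, 1 ≤ n →
    ∀ N, TracebackFrom (BLNet (pl 1)) (pl n) N → PInv N := by
  intro n hn
  induction n, hn using Nat.le_induction with
  | base =>
    intro N hN
    cases hN with
    | base _ _ => exact core_PInv
    | step _ R'' _ htr hstep => exact absurd simple_pl_one hstep.2.1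
  | succ n hn ih =>
    intro N hN
    obtain ⟨m, rfl⟩ : ∃ m, n = m + 1 := ⟨n - 1, by omega⟩
    cases hN with
    | base _ hsimp => exact absurd hsimp (not_simple_pl (by omega))
    | step _ R'' _ htr hstep =>
      rw [simpStep_pl m] at htr
      cases htr with
      | base _ hsimp => exact absurd hsimp (not_simple_cons_pl (by omega))
      | step _ R₀ _ htr₀ hstep₀ =>
        rw [simpStep_mid m] at htr₀
        have hP₀ := ih R₀ htr₀
        obtain ⟨-, -, hcase₀⟩ := hstep₀
        have hexp : CherryExpandOp R₀ R'' := by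
          rcases hcase₀ with ⟨-, h⟩ | ⟨hlt, -⟩ | ⟨hpos, -, -⟩
          · exact h
          · exfalso
            rw [List.headI_cons, List.tail_cons, pl_headI] at hlt
            have h2 : (1:ℕ) ≤ 2^(m+1) := Nat.one_le_two_pow
            omega
          · exfalso
            rw [List.headI_cons, List.tail_cons, pl_headI] at hpos
            have h2 : (1:ℕ) ≤ 2^(m+1) := Nat.one_le_two_pow
            omega
        obtain ⟨-, -, hcase⟩ := hstep
        have hins : InsertBackOp 1 R'' N := by
          rcases hcase with ⟨heq, -⟩ | ⟨hlt, -⟩ | ⟨-, -, h⟩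
          · exfalso
            rw [pl_succ, List.headI_cons, List.tail_cons, pl_headI] at heq
            have := two_pow_lt (m+1)
            omega
          · exfalso
            rw [pl_succ, List.headI_cons, List.tail_cons, pl_headI] at hlt
            have h2 : (2:ℕ)^(m+2) = 2*2^(m+1) := by ring
            omega
          · rwa [take_one m] at h
        exact step_PInv hP₀ hexp hins

/-- For every `n ≥ 1` the ploidy profile
`(2^n, 2^{n-1}, …, 2^0)` is tree-child; in particular every realization `N(m)` of
it obtained by the traceback initialized with the core network `B(m)` is a
tree-child phylogenetic network. -/
theorem powers_of_two_tree_child (n : ℕ) (hn : 1 ≤ n) (mt : List ℕ)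
    (ht : IsTerminal ((List.range (n + 1)).reverse.map (2 ^ ·)) mt) :
    (∃ R : LNet, RealizesL R ((List.range (n + 1)).reverse.map (2 ^ ·)) ∧
      IsTreeChild R.net) ∧
    (∀ N : LNet, TracebackFrom (BLNet mt) ((List.range (n + 1)).reverse.map (2 ^ ·)) N →
      IsTreeChild N.net) := by
  have hmt : mt = pl 1 := terminal_eq hn ht
  constructor
  · exact ⟨TR n, TR_realizes hn, TNet_treeChild hn⟩
  · intro N hN
    rw [hmt] at hN
    exact (traceback_PInv n hn N hN).2.1

end Ploidy
end

section
/- The ploidy profile (3) on a single-element set {x_1} is not tree-child: no phylogenetic network on {x_1} in which the number of directed paths from the root to x_1 equals 3 is tree-child. -/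
/-!
Formalization preamble for "Autopolyploidy, allopolyploidy, and phylogenetic
networks with horizontal arcs" (Huber & Maher).

Networks are finite directed multigraphs whose vertices and arcs are (finitely
many) natural numbers; parallel arcs (beads) are allowed, loops are not.
-/

namespace Ploidy

/-! ### Auxiliary lemmas for Statement 16 -/

/-- All arcs of a walk avoid non-bead reticulations as targets. -/
def SafeL (G : Net) (l : List ℕ) : Prop :=
  ∀ a ∈ l, IsReticN G (G.tgt a) → InBead G (G.tgt a)

lemma isWalk_append_forward {G : Net} (hphy : IsPhylo G) {l1 l2 : List ℕ} {u w : ℕ}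
    (hu : u ∈ G.verts) (h : IsWalk G (l1 ++ l2) u w) :
    ∃ z, IsWalk G l1 u z ∧ IsWalk G l2 z w := by
  induction l1 generalizing u with
  | nil => exact ⟨u, ⟨rfl, hu⟩, h⟩
  | cons a t ih =>
    obtain ⟨ha, hsrc, hrest⟩ := h
    obtain ⟨z, h1, h2⟩ := ih (hphy.tgt_mem a ha) hrest
    exact ⟨z, ⟨ha, hsrc, h1⟩, h2⟩

lemma isWalk_append_back {G : Net} {l1 l2 : List ℕ} {u z w : ℕ}
    (h1 : IsWalk G l1 u z) (h2 : IsWalk G l2 z w) : IsWalk G (l1 ++ l2) u w := by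
  induction l1 generalizing u with
  | nil => obtain ⟨rfl, _⟩ := h1; exact h2
  | cons a t ih =>
    obtain ⟨ha, hs, hr⟩ := h1
    exact ⟨ha, hs, ih hr⟩

lemma walk_last_arc {G : Net} (hphy : IsPhylo G) {l : List ℕ} {u w : ℕ}
    (h : IsWalk G l u w) (hne : l ≠ []) :
    ∃ m b z, l = m ++ [b] ∧ IsWalk G m u z ∧ ArcFT G b z w := by
  induction l generalizing u with
  | nil => exact absurd rfl hne
  | cons a t ih =>
    obtain ⟨ha, hs, hr⟩ := h
    rcases eq_or_ne t [] with rfl | htne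
    · obtain ⟨h1, _⟩ := hr
      refine ⟨[], a, u, rfl, ⟨rfl, ?_⟩, ha, hs, h1⟩
      rw [← hs]; exact hphy.src_mem a ha
    · obtain ⟨m, b, z, heq, hm, hb⟩ := ih hr htne
      exact ⟨a :: m, b, z, by rw [heq]; rfl, ⟨ha, hs, hm⟩, hb⟩

/-- Two arcs into the same vertex have the same source, provided that vertex,
if a reticulation, is in a bead. -/
lemma same_source {G : Net} (hphy : IsPhylo G) {a b : ℕ}
    (ha : a ∈ G.arcs) (hb : b ∈ G.arcs) (htgt : G.tgt a = G.tgt b)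
    (hsafe : IsReticN G (G.tgt a) → InBead G (G.tgt a)) : G.src a = G.src b := by
  set u := G.tgt a with hu
  have hamem : a ∈ G.arcs.filter (fun e => G.tgt e = u) := Finset.mem_filter.mpr ⟨ha, rfl⟩
  have hbmem : b ∈ G.arcs.filter (fun e => G.tgt e = u) := Finset.mem_filter.mpr ⟨hb, htgt.symm⟩
  have huv : u ∈ G.verts := hphy.tgt_mem a ha
  rcases hphy.types u huv with hroot | hlf | htr | hret
  · have h0 : (G.arcs.filter fun e => G.tgt e = u) = ∅ := Finset.card_eq_zero.mp hroot.2
    rw [h0] at hamem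
    exact absurd hamem (Finset.notMem_empty a)
  · exact congrArg G.src (Finset.card_le_one.mp (le_of_eq hlf.2.1) a hamem b hbmem)
  · exact congrArg G.src (Finset.card_le_one.mp (le_of_eq htr.2.1) a hamem b hbmem)
  · have hbead : InBead G u := hsafe hret
    obtain ⟨c, d, hc, hd, hcd, hscd, htcd, hend⟩ := hbead
    rcases hend with hsrc | htgtc
    · have h2 : 1 < outDeg G u := Finset.one_lt_card.mpr
        ⟨c, Finset.mem_filter.mpr ⟨hc, hsrc⟩, d,
          Finset.mem_filter.mpr ⟨hd, by rw [← hscd]; exact hsrc⟩, hcd⟩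
      rw [hret.2.2] at h2
      exact absurd h2 (lt_irrefl 1)
    · have hsub : ({c, d} : Finset ℕ) ⊆ G.arcs.filter fun e => G.tgt e = u := by
        intro x hx
        rcases Finset.mem_insert.mp hx with rfl | hx
        · exact Finset.mem_filter.mpr ⟨hc, htgtc⟩
        · rw [Finset.mem_singleton.mp hx]
          exact Finset.mem_filter.mpr ⟨hd, by rw [← htcd]; exact htgtc⟩
      have hcardle : (G.arcs.filter fun e => G.tgt e = u).card ≤ ({c, d} : Finset ℕ).card := by
        rw [Finset.card_pair hcd]
        exact le_of_eq hret.2.1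
      have heq := Finset.eq_of_subset_of_card_le hsub hcardle
      rw [← heq] at hamem hbmem
      have hsa : G.src a = G.src c := by
        rcases Finset.mem_insert.mp hamem with rfl | h
        · rfl
        · rw [Finset.mem_singleton.mp h, hscd]
      have hsb : G.src b = G.src c := by
        rcases Finset.mem_insert.mp hbmem with rfl | h
        · rfl
        · rw [Finset.mem_singleton.mp h, hscd]
      rw [hsa, hsb]

/-- A safe walk to `v` is determined, at the level of its initial vertex, by its
length. -/
lemma walk_length_det {G : Net} (hphy : IsPhylo G) {v : ℕ} :
    ∀ (l1 : List ℕ) (u1 : ℕ), IsWalk G l1 u1 v → SafeL G l1 →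
    ∀ (l2 : List ℕ) (u2 : ℕ), IsWalk G l2 u2 v → SafeL G l2 →
      l1.length = l2.length → u1 = u2 := by
  intro l1
  induction l1 with
  | nil =>
    intro u1 h1 _ l2 u2 h2 _ hlen
    cases l2 with
    | nil =>
      obtain ⟨rfl, _⟩ := h1
      obtain ⟨rfl, _⟩ := h2
      rfl
    | cons b t => simp at hlen
  | cons a t ih =>
    intro u1 h1 hs1 l2 u2 h2 hs2 hlen
    cases l2 with
    | nil => simp at hlen
    | cons b t2 =>
      obtain ⟨ha, hsa, hw1⟩ := h1
      obtain ⟨hb, hsb, hw2⟩ := h2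
      have htgt : G.tgt a = G.tgt b :=
        ih (G.tgt a) hw1 (fun x hx => hs1 x (List.mem_cons_of_mem _ hx))
          t2 (G.tgt b) hw2 (fun x hx => hs2 x (List.mem_cons_of_mem _ hx))
          (by simpa using hlen)
      have := same_source hphy ha hb htgt (hs1 a List.mem_cons_self)
      rw [← hsa, ← hsb, this]

lemma walk_connect {G : Net} (hphy : IsPhylo G) {v : ℕ} {l1 l2 : List ℕ} {u1 u2 : ℕ}
    (h1 : IsWalk G l1 u1 v) (hs1 : SafeL G l1)
    (h2 : IsWalk G l2 u2 v) (hs2 : SafeL G l2)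
    (hu2 : u2 ∈ G.verts) (hlen : l1.length ≤ l2.length) :
    ∃ m, IsWalk G m u2 u1 ∧ SafeL G m ∧ m.length = l2.length - l1.length := by
  set k := l2.length - l1.length with hk
  have hsplit : IsWalk G (l2.take k ++ l2.drop k) u2 v := by
    rw [List.take_append_drop]; exact h2
  obtain ⟨z, hzw1, hzw2⟩ := isWalk_append_forward hphy hu2 hsplit
  have hdlen : (l2.drop k).length = l1.length := by
    rw [List.length_drop]; omega
  have hz : z = u1 :=
    walk_length_det hphy (l2.drop k) z hzw2
      (fun x hx => hs2 x (List.drop_subset k l2 hx)) l1 u1 h1 hs1 hdlen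
  refine ⟨l2.take k, hz ▸ hzw1, fun x hx => hs2 x (List.take_subset k l2 hx), ?_⟩
  rw [List.length_take]
  omega

/-- In a phylogenetic network with a single leaf `v` and safe walks from every
vertex to `v`, every reticulation vertex is contained in a bead. -/
lemma no_unbeaded_retic {G : Net} (hphy : IsPhylo G) {v : ℕ}
    (hsafeexists : ∀ u ∈ G.verts, ∃ l, IsWalk G l u v ∧ SafeL G l)
    {h : ℕ} (hret : IsReticN G h) : InBead G h := by
  by_contra hnb
  have hpos : 0 < inDeg G h := by rw [hret.2.1]; norm_num
  obtain ⟨a, hamem⟩ := Finset.card_pos.mp hpos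
  obtain ⟨ha, hta⟩ := Finset.mem_filter.mp hamem
  have hpv : G.src a ∈ G.verts := hphy.src_mem a ha
  obtain ⟨lh, hlh, hslh⟩ := hsafeexists h hret.1
  obtain ⟨lp, hlp, hslp⟩ := hsafeexists (G.src a) hpv
  rcases lt_trichotomy lp.length lh.length with hlt | heq | hgt
  · obtain ⟨m, hm, _, hmlen⟩ := walk_connect hphy hlp hslp hlh hslh hret.1 hlt.le
    have hone : IsWalk G [a] (G.src a) h := ⟨ha, rfl, hta, by rw [hta]; exact hret.1⟩
    have hcyc : IsWalk G (m ++ [a]) h h := isWalk_append_back hm hone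
    exact hphy.acyclic h (m ++ [a]) (by simp) hcyc
  · have hph : G.src a = h := walk_length_det hphy lp (G.src a) hlp hslp lh h hlh hslh heq
    exact hphy.no_loop a ha (hph.trans hta.symm)
  · obtain ⟨m, hm, hsm, hmlen⟩ := walk_connect hphy hlh hslh hlp hslp hpv hgt.le
    have hmne : m ≠ [] := by
      intro hnil
      rw [hnil] at hmlen
      simp at hmlen
      omega
    obtain ⟨m', b, z, hmeq, _, hb⟩ := walk_last_arc hphy hm hmne
    have hbm : b ∈ m := by rw [hmeq]; simp
    have := hsm b hbm
    rw [hb.2.2] at this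
    exact hnb (this hret)


/-- The ploidy profile `(3)` on a single-element set `{x₁}` is
not tree-child: no phylogenetic network with a single leaf `v` in which the number
of directed paths from the root to `v` equals 3 is tree-child. -/
theorem profile_three_not_tree_child (G : Net) (r v : ℕ) (hphy : IsPhylo G)
    (hr : IsRootN G r) (hv : IsLeafN G v) (huniq : ∀ w, IsLeafN G w → w = v)
    (h3 : nPaths G r v = 3) :
    ¬ IsTreeChild G := by
  intro hTC
  have hsafeexists : ∀ u ∈ G.verts, ∃ l, IsWalk G l u v ∧ SafeL G l := by
    intro u hu
    obtain ⟨l, w, hw, hleaf, hs⟩ := hTC u hu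
    exact ⟨l, by rw [← huniq w hleaf]; exact hw, hs⟩
  have hallbead : ∀ h, IsReticN G h → InBead G h :=
    fun h hret => no_unbeaded_retic hphy hsafeexists hret
  have hallsafe : ∀ l : List ℕ, SafeL G l := fun l a _ hret => hallbead _ hret
  have hnoarc_root : ∀ b ∈ G.arcs, G.tgt b ≠ r := by
    intro b hb htb
    have hmem : b ∈ G.arcs.filter fun a => G.tgt a = r := Finset.mem_filter.mpr ⟨hb, htb⟩
    have hpos : 0 < inDeg G r := Finset.card_pos.mpr ⟨b, hmem⟩
    rw [hr.2] at hpos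
    exact absurd hpos (lt_irrefl 0)
  have hrv : r ≠ v := by
    intro h
    have h0 := hr.2
    rw [h, hv.2.1] at h0
    exact one_ne_zero h0
  have hout : outDeg G r = 2 := hphy.root_out r hr
  obtain ⟨e1, e2, hne, hpair⟩ := Finset.card_eq_two.mp hout
  have he1m : e1 ∈ G.arcs.filter fun a => G.src a = r := by
    rw [hpair]; exact Finset.mem_insert_self _ _
  have he2m : e2 ∈ G.arcs.filter fun a => G.src a = r := by
    rw [hpair]; exact Finset.mem_insert_of_mem (Finset.mem_singleton_self _)
  obtain ⟨he1a, he1s⟩ := Finset.mem_filter.mp he1m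
  obtain ⟨he2a, he2s⟩ := Finset.mem_filter.mp he2m
  have hmemrf : ∀ b ∈ G.arcs, G.src b = r → b = e1 ∨ b = e2 := by
    intro b hb hs
    have hmem : b ∈ G.arcs.filter fun a => G.src a = r := Finset.mem_filter.mpr ⟨hb, hs⟩
    rw [hpair] at hmem
    simpa using hmem
  have key : ∀ e f : ℕ, e ∈ G.arcs → G.src e = r → f ∈ G.arcs → G.src f = r →
      (∀ b ∈ G.arcs, G.src b = r → b = e ∨ b = f) →
      G.tgt e ≠ G.tgt f → ∀ m, IsWalk G m (G.tgt f) (G.tgt e) → m ≠ [] → False := by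
    intro e f hea hes hfa hfs hef htne m hm hmne
    obtain ⟨m', b, z, hmeq, hm', hbarc⟩ := walk_last_arc hphy hm hmne
    obtain ⟨hba, hbs, hbt⟩ := hbarc
    have hsb : G.src b = G.src e :=
      same_source hphy hba hea (by rw [hbt]) (fun hret => hallbead _ hret)
    rcases hef b hba (by rw [hsb, hes]) with rfl | rfl
    · have hz : z = r := hbs.symm.trans (hsb.trans hes)
      subst hz
      cases m' with
      | nil => exact hnoarc_root f hfa hm'.1
      | cons c t =>
        obtain ⟨_, b', z', _, _, hb'⟩ := walk_last_arc hphy hm' (by simp)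
        exact hnoarc_root b' hb'.1 hb'.2.2
    · exact htne hbt.symm
  have htgteq : G.tgt e1 = G.tgt e2 := by
    by_contra htne
    obtain ⟨l1, hl1, _⟩ := hsafeexists (G.tgt e1) (hphy.tgt_mem e1 he1a)
    obtain ⟨l2, hl2, _⟩ := hsafeexists (G.tgt e2) (hphy.tgt_mem e2 he2a)
    rcases lt_trichotomy l1.length l2.length with hlt | heq | hgt
    · obtain ⟨m, hm, _, hmlen⟩ := walk_connect hphy hl1 (hallsafe l1) hl2 (hallsafe l2)
        (hphy.tgt_mem e2 he2a) hlt.le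
      refine key e1 e2 he1a he1s he2a he2s hmemrf htne m hm ?_
      intro hnil
      rw [hnil] at hmlen
      simp at hmlen
      omega
    · exact htne (walk_length_det hphy l1 _ hl1 (hallsafe l1) l2 _ hl2 (hallsafe l2) heq)
    · obtain ⟨m, hm, _, hmlen⟩ := walk_connect hphy hl2 (hallsafe l2) hl1 (hallsafe l1)
        (hphy.tgt_mem e1 he1a) hgt.le
      refine key e2 e1 he2a he2s he1a he1s
        (fun b hb hsb => (hmemrf b hb hsb).symm) (Ne.symm htne) m hm ?_
      intro hnil
      rw [hnil] at hmlen
      simp at hmlen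
      omega
  set W : Set (List ℕ) := {l | IsWalk G l r v} with hW
  have h3' : W.ncard = 3 := h3
  have hWfin : W.Finite := by
    by_contra hinf
    have h0 : W.ncard = 0 := Set.Infinite.ncard hinf
    omega
  set T : Set (List ℕ) := {l | IsWalk G l (G.tgt e1) v} with hT
  have hWT : W = (fun l => e1 :: l) '' T ∪ (fun l => e2 :: l) '' T := by
    ext l
    simp only [Set.mem_union, Set.mem_image, hW, hT, Set.mem_setOf_eq]
    constructor
    · intro hl
      cases l with
      | nil => exact absurd hl.1 hrv
      | cons a t =>
        obtain ⟨ha, hsa, hw⟩ := hl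
        rcases hmemrf a ha hsa with rfl | rfl
        · exact Or.inl ⟨t, hw, rfl⟩
        · exact Or.inr ⟨t, by rw [htgteq]; exact hw, rfl⟩
    · rintro (⟨t, ht, rfl⟩ | ⟨t, ht, rfl⟩)
      · exact ⟨he1a, he1s, ht⟩
      · refine ⟨he2a, he2s, ?_⟩
        rw [← htgteq]
        exact ht
  have hfin1 : ((fun l => e1 :: l) '' T).Finite :=
    hWfin.subset (by rw [hWT]; exact Set.subset_union_left)
  have hfin2 : ((fun l => e2 :: l) '' T).Finite :=
    hWfin.subset (by rw [hWT]; exact Set.subset_union_right)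
  have hdisj : Disjoint ((fun l => e1 :: l) '' T) ((fun l => e2 :: l) '' T) := by
    rw [Set.disjoint_left]
    rintro x ⟨t, _, rfl⟩ ⟨t', _, hx⟩
    have := (List.cons.injEq e2 t' e1 t).mp hx
    exact hne this.1.symm
  have hinj1 : Function.Injective (fun l : List ℕ => e1 :: l) :=
    fun x y h => ((List.cons.injEq _ _ _ _).mp h).2
  have hinj2 : Function.Injective (fun l : List ℕ => e2 :: l) :=
    fun x y h => ((List.cons.injEq _ _ _ _).mp h).2
  have hcard : W.ncard = T.ncard + T.ncard := by
    rw [hWT, Set.ncard_union_eq hdisj hfin1 hfin2,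
      Set.ncard_image_of_injective T hinj1, Set.ncard_image_of_injective T hinj2]
  omega

end Ploidy
end
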